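/- arXiv:1708.03363 — 9 statements merged into one kernel-verified Lean document; each statement's English description precedes it below -/
import Mathlib

section
/- Let $(\Omega,\Sigma,\mu)$ and $(\Omega',\Sigma',\nu)$ be measure spaces, $0 < u, v \le \infty$ and $0 < p < q < \infty$. If a bounded linear operator $T : L^u(\mu) \to L^v(\nu)$ is $(p,q)$-regular with some constant $K > 0$, then $T = 0$. -/
open MeasureTheory ENNReal

/-- `T` is `(p,q)`-regular with constant `K`. -/
def IsPQRegular {Ω Ω' : Type*} [MeasurableSpace Ω] [MeasurableSpace Ω']
    {μ : Measure Ω} {ν : Measure Ω'} {u v : ℝ≥0∞}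
    (T : Lp ℝ u μ → Lp ℝ v ν) (p q K : ℝ) : Prop :=
  ∀ (n : ℕ) (f : Fin n → Lp ℝ u μ),
    eLpNorm (fun ω' => (∑ i, |T (f i) ω'| ^ p) ^ (1 / p)) v ν ≤
      ENNReal.ofReal K * eLpNorm (fun ω => (∑ i, |f i ω| ^ q) ^ (1 / q)) u μ

lemma aux_sum_const {α : Type*} [MeasurableSpace α] {w : ℝ≥0∞} {m : Measure α}
    (g : α → ℝ) {r : ℝ} (hr : 0 < r) (n : ℕ) :
    eLpNorm (fun ω => (∑ _i : Fin n, |g ω| ^ r) ^ (1 / r)) w m =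
      ENNReal.ofReal ((n : ℝ) ^ (1 / r)) * eLpNorm g w m := by
  have h1 : (fun ω => (∑ _i : Fin n, |g ω| ^ r) ^ (1 / r)) =
      ((n : ℝ) ^ (1 / r)) • (fun ω => |g ω|) := by
    funext ω
    simp only [Finset.sum_const, Finset.card_univ, Fintype.card_fin, nsmul_eq_mul,
      Pi.smul_apply, smul_eq_mul]
    rw [Real.mul_rpow (by positivity) (by positivity),
      ← Real.rpow_mul (abs_nonneg _), mul_one_div_cancel hr.ne',
      Real.rpow_one]
  rw [h1, eLpNorm_const_smul]
  have h2 : eLpNorm (fun ω => |g ω|) w m = eLpNorm g w m := eLpNorm_norm g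
  rw [h2, Real.enorm_eq_ofReal (by positivity)]

/-- If `0 < p < q < ∞` and `T : L^u(μ) → L^v(ν)` is `(p,q)`-regular with some
constant `K > 0`, then `T = 0`. -/
theorem stmt3 {Ω Ω' : Type*} [MeasurableSpace Ω] [MeasurableSpace Ω']
    (μ : Measure Ω) (ν : Measure Ω') {u v : ℝ≥0∞} (hu : 0 < u) (hv : 0 < v)
    {p q : ℝ} (hp : 0 < p) (hpq : p < q)
    {K : ℝ} (hK : 0 < K) (T : Lp ℝ u μ →ₗ[ℝ] Lp ℝ v ν)
    (hT : IsPQRegular (⇑T) p q K) :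
    T = 0 := by
  have hq : 0 < q := hp.trans hpq
  apply LinearMap.ext
  intro f
  set A : ℝ≥0∞ := eLpNorm (⇑(T f)) v ν with hA
  set B : ℝ≥0∞ := eLpNorm (⇑f) u μ with hB
  have hBlt : B < ∞ := Lp.eLpNorm_lt_top f
  -- key inequality for each n
  have key : ∀ n : ℕ, 1 ≤ n →
      A ≤ ENNReal.ofReal (K * (n : ℝ) ^ (1 / q - 1 / p)) * B := by
    intro n hn
    have hn0 : (0 : ℝ) < n := by exact_mod_cast hn
    have h := hT n (fun _ => f)
    rw [aux_sum_const (⇑(T f)) hp n, aux_sum_const (⇑f) hq n] at h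
    -- multiply both sides by ofReal (n ^ (-(1/p)))
    have hmul := mul_le_mul_right h (ENNReal.ofReal ((n : ℝ) ^ (-(1 / p))))
    rw [← mul_assoc, ← ENNReal.ofReal_mul (by positivity),
      ← Real.rpow_add hn0, neg_add_cancel, Real.rpow_zero, ENNReal.ofReal_one,
      one_mul] at hmul
    calc A ≤ ENNReal.ofReal ((n : ℝ) ^ (-(1 / p))) *
          (ENNReal.ofReal K * (ENNReal.ofReal ((n : ℝ) ^ (1 / q)) * B)) := hmul
      _ = ENNReal.ofReal (K * (n : ℝ) ^ (1 / q - 1 / p)) * B := by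
          rw [← mul_assoc, ← mul_assoc, ← ENNReal.ofReal_mul (by positivity),
            ← ENNReal.ofReal_mul (by positivity)]
          congr 2
          rw [mul_comm ((n : ℝ) ^ (-(1 / p))) K, mul_assoc,
            ← Real.rpow_add hn0]
          ring_nf
  -- the RHS tends to 0
  have hexp : (0 : ℝ) < 1 / p - 1 / q := by
    have := one_div_lt_one_div_of_lt hp hpq
    linarith
  have htend : Filter.Tendsto
      (fun n : ℕ => ENNReal.ofReal (K * (n : ℝ) ^ (1 / q - 1 / p)) * B)
      Filter.atTop (nhds 0) := by
    have h1 : Filter.Tendsto (fun x : ℝ => x ^ (-(1 / p - 1 / q)))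
        Filter.atTop (nhds 0) := tendsto_rpow_neg_atTop hexp
    have h2 : Filter.Tendsto (fun n : ℕ => K * (n : ℝ) ^ (1 / q - 1 / p))
        Filter.atTop (nhds 0) := by
      have := (h1.comp tendsto_natCast_atTop_atTop).const_mul K
      simpa using this
    have h3 : Filter.Tendsto (fun n : ℕ => ENNReal.ofReal (K * (n : ℝ) ^ (1 / q - 1 / p)))
        Filter.atTop (nhds 0) := by
      have := (ENNReal.continuous_ofReal.tendsto 0).comp h2
      simpa [Function.comp_def] using this
    simpa using ENNReal.Tendsto.mul_const h3 (Or.inr hBlt.ne)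
  have hA0 : A = 0 := by
    have hle : A ≤ 0 :=
      le_of_tendsto_of_tendsto (tendsto_const_nhds : Filter.Tendsto (fun _ : ℕ => A)
        Filter.atTop (nhds A)) htend
        (Filter.eventually_atTop.2 ⟨1, fun n hn => key n hn⟩)
    exact le_antisymm hle zero_le
  have hTf : ⇑(T f) =ᵐ[ν] 0 :=
    (eLpNorm_eq_zero_iff (Lp.aestronglyMeasurable (T f)) hv.ne').1 hA0
  show T f = 0
  exact Subtype.eq (AEEqFun.ext (hTf.trans (Lp.coeFn_zero ℝ v ν).symm))
end

section
/- Let $(\Omega,\Sigma,\mu)$ and $(\Omega',\Sigma',\nu)$ be measure spaces, $1 \le u, v \le \infty$ and $1 \le q \le p < \infty$. For a $(p,q)$-regular operator $T$ let $\rho_{p,q}(T)$ denote the infimum of all constants $K$ for which $T$ is $(p,q)$-regular with constant $K$. Then the space of $(p,q)$-regular operators from $L^u(\mu)$ to $L^v(\nu)$ is complete with respect to $\rho_{p,q}$: if $(T_n)$ is a sequence of $(p,q)$-regular operators with $\rho_{p,q}(T_n - T_m) \to 0$ as $n,m \to \infty$, then there exists a $(p,q)$-regular operator $T$ with $\rho_{p,q}(T_n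 - T) \to 0$. -/
open MeasureTheory ENNReal

private lemma aux_rpow_sum_le {n : ℕ} (a : Fin n → ℝ) (ha : ∀ i, 0 ≤ a i) {p : ℝ}
    (hp : 1 ≤ p) : (∑ i, a i ^ p) ^ (1 / p) ≤ ∑ i, a i := by
  have hp0 : p ≠ 0 := by positivity
  set S := ∑ i, a i with hS
  have hS0 : 0 ≤ S := Finset.sum_nonneg fun i _ => ha i
  rcases eq_or_lt_of_le hS0 with h0 | hSpos
  · have hz : ∀ i ∈ Finset.univ, a i = 0 := by
      intro i _
      have := (Finset.sum_eq_zero_iff_of_nonneg (fun i _ => ha i)).1 h0.symm i (Finset.mem_univ i)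
      exact this
    rw [Finset.sum_congr rfl (fun i hi => by rw [hz i hi, Real.zero_rpow hp0])]
    rw [Finset.sum_const, smul_zero, Real.zero_rpow (by positivity : (1:ℝ)/p ≠ 0)]
    exact hS0
  · have key : ∑ i, a i ^ p ≤ S ^ p := by
      have : ∀ i, a i ^ p ≤ a i * S ^ (p - 1) := by
        intro i
        rcases eq_or_lt_of_le (ha i) with h | h
        · rw [← h, Real.zero_rpow hp0, zero_mul]
        · calc a i ^ p = a i ^ (1 + (p - 1)) := by ring_nf
            _ = a i ^ (1:ℝ) * a i ^ (p - 1) := Real.rpow_add h 1 (p-1)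
            _ ≤ a i * S ^ (p - 1) := by
                rw [Real.rpow_one]
                exact mul_le_mul_of_nonneg_left
                  (Real.rpow_le_rpow (ha i) (Finset.single_le_sum (fun j _ => ha j)
                    (Finset.mem_univ i)) (by linarith)) (ha i)
      calc ∑ i, a i ^ p ≤ ∑ i, a i * S ^ (p - 1) := Finset.sum_le_sum fun i _ => this i
        _ = S * S ^ (p - 1) := by rw [← Finset.sum_mul]
        _ = S ^ (1:ℝ) * S ^ (p - 1) := by rw [Real.rpow_one]
        _ = S ^ p := by rw [← Real.rpow_add hSpos]; ring_nf
    calc (∑ i, a i ^ p) ^ (1/p) ≤ (S ^ p) ^ (1/p) :=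
          Real.rpow_le_rpow (Finset.sum_nonneg fun i _ => Real.rpow_nonneg (ha i) p) key
            (by positivity)
      _ = S := by
          rw [← Real.rpow_mul hS0, mul_one_div_cancel hp0, Real.rpow_one]

private lemma aux_aesm {Ω' : Type*} [MeasurableSpace Ω'] {ν : Measure Ω'} {n : ℕ}
    {g : Fin n → Ω' → ℝ} (hg : ∀ i, AEStronglyMeasurable (g i) ν) {p : ℝ} (hp : 1 ≤ p) :
    AEStronglyMeasurable (fun ω => (∑ i, |g i ω| ^ p) ^ (1/p)) ν := by
  have h1 : AEStronglyMeasurable (fun ω => ∑ i, |g i ω| ^ p) ν := by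
    apply Finset.aestronglyMeasurable_fun_sum
    intro i _
    exact (Real.continuous_rpow_const (by linarith)).comp_aestronglyMeasurable (hg i).norm
  exact (Real.continuous_rpow_const (by positivity)).comp_aestronglyMeasurable h1

private lemma aux_Phi_le_sum {Ω' : Type*} [MeasurableSpace Ω'] {ν : Measure Ω'} {v : ℝ≥0∞}
    (hv : 1 ≤ v) {n : ℕ} {g : Fin n → Ω' → ℝ} (hg : ∀ i, AEStronglyMeasurable (g i) ν)
    {p : ℝ} (hp : 1 ≤ p) :
    eLpNorm (fun ω => (∑ i, |g i ω| ^ p) ^ (1/p)) v ν ≤ ∑ i, eLpNorm (g i) v ν := by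
  have h1 : eLpNorm (fun ω => (∑ i, |g i ω| ^ p) ^ (1/p)) v ν ≤
      eLpNorm (∑ i, fun ω => |g i ω|) v ν := by
    apply eLpNorm_mono
    intro ω
    rw [Real.norm_eq_abs, Real.norm_eq_abs]
    have h2 : (∑ i, fun ω => |g i ω|) ω = ∑ i, |g i ω| := by simp [Finset.sum_apply]
    rw [h2, abs_of_nonneg (by positivity), abs_of_nonneg (by positivity)]
    exact aux_rpow_sum_le _ (fun i => abs_nonneg _) hp
  refine h1.trans ((eLpNorm_sum_le (fun i _ => (hg i).norm) hv).trans ?_)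
  apply Finset.sum_le_sum
  intro i _
  have h3 : eLpNorm (fun ω => |g i ω|) v ν = eLpNorm (g i) v ν := by
    simpa [Real.norm_eq_abs] using eLpNorm_norm (μ := ν) (p := v) (g i)
  exact h3.le

private lemma aux_Phi_add {Ω' : Type*} [MeasurableSpace Ω'] {ν : Measure Ω'} {v : ℝ≥0∞}
    (hv : 1 ≤ v) {n : ℕ} {g h : Fin n → Ω' → ℝ}
    (hg : ∀ i, AEStronglyMeasurable (g i) ν) (hh : ∀ i, AEStronglyMeasurable (h i) ν)
    {p : ℝ} (hp : 1 ≤ p) :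
    eLpNorm (fun ω => (∑ i, |g i ω + h i ω| ^ p) ^ (1/p)) v ν ≤
      eLpNorm (fun ω => (∑ i, |g i ω| ^ p) ^ (1/p)) v ν +
        eLpNorm (fun ω => (∑ i, |h i ω| ^ p) ^ (1/p)) v ν := by
  have h1 : eLpNorm (fun ω => (∑ i, |g i ω + h i ω| ^ p) ^ (1/p)) v ν ≤
      eLpNorm ((fun ω => (∑ i, |g i ω| ^ p) ^ (1/p)) +
        fun ω => (∑ i, |h i ω| ^ p) ^ (1/p)) v ν := by
    apply eLpNorm_mono
    intro ω
    simp only [Pi.add_apply, Real.norm_eq_abs]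
    rw [abs_of_nonneg (by positivity)]
    refine le_trans (Real.Lp_add_le Finset.univ (fun i => g i ω) (fun i => h i ω) hp) ?_
    rw [abs_of_nonneg (by positivity : (0:ℝ) ≤ (∑ i, |g i ω| ^ p) ^ (1/p) +
      (∑ i, |h i ω| ^ p) ^ (1/p))]
  exact h1.trans (eLpNorm_add_le (aux_aesm hg hp) (aux_aesm hh hp) hv)

set_option maxHeartbeats 1000000 in
/-- The space of `(p,q)`-regular operators between Lebesgue spaces is complete
with respect to the regularity "norm" `ρ_{p,q}`: a sequence of `(p,q)`-regular
operators which is Cauchy for `ρ_{p,q}` converges in `ρ_{p,q}` to a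
`(p,q)`-regular operator. -/
theorem stmt4 {Ω Ω' : Type*} [MeasurableSpace Ω] [MeasurableSpace Ω']
    (μ : Measure Ω) (ν : Measure Ω') (u v : ℝ≥0∞) [Fact (1 ≤ u)] [Fact (1 ≤ v)]
    (p q : ℝ) (hq : 1 ≤ q) (hqp : q ≤ p)
    (T : ℕ → (Lp ℝ u μ →L[ℝ] Lp ℝ v ν))
    (hreg : ∀ n : ℕ, ∃ K : ℝ, 0 ≤ K ∧ IsPQRegular (⇑(T n)) p q K)
    (hcauchy : ∀ ε : ℝ, 0 < ε → ∃ N : ℕ, ∀ m k : ℕ, N ≤ m → N ≤ k →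
      IsPQRegular (⇑(T m - T k)) p q ε) :
    ∃ S : Lp ℝ u μ →L[ℝ] Lp ℝ v ν,
      (∃ K : ℝ, 0 ≤ K ∧ IsPQRegular (⇑S) p q K) ∧
      ∀ ε : ℝ, 0 < ε → ∃ N : ℕ, ∀ m : ℕ, N ≤ m →
        IsPQRegular (⇑(T m - S)) p q ε := by
  have hp : 1 ≤ p := hq.trans hqp
  have hp0 : p ≠ 0 := by positivity
  have hq0 : q ≠ 0 := by positivity
  have hv : 1 ≤ v := Fact.out
  have hLpv : ∀ g : Lp ℝ v ν, eLpNorm (⇑g) v ν = ENNReal.ofReal ‖g‖ := fun g => by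
    rw [Lp.norm_def, ENNReal.ofReal_toReal (Lp.eLpNorm_ne_top g)]
  have hLpu : ∀ g : Lp ℝ u μ, eLpNorm (⇑g) u μ = ENNReal.ofReal ‖g‖ := fun g => by
    rw [Lp.norm_def, ENNReal.ofReal_toReal (Lp.eLpNorm_ne_top g)]
  -- Step A: an operator which is (p,q)-regular with constant K has norm ≤ K
  have hnorm : ∀ (A : Lp ℝ u μ →L[ℝ] Lp ℝ v ν) (K : ℝ), 0 ≤ K → IsPQRegular (⇑A) p q K →
      ∀ g : Lp ℝ u μ, ‖A g‖ ≤ K * ‖g‖ := by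
    intro A K hK hA g
    have h1 := hA 1 ![g]
    have e1 : (fun ω' => (∑ i : Fin 1, |A (![g] i) ω'| ^ p) ^ (1 / p)) =
        fun ω' => |A g ω'| := by
      funext ω'
      simp only [Fin.sum_univ_one, Matrix.cons_val_zero]
      rw [← Real.rpow_mul (abs_nonneg _), mul_one_div_cancel hp0, Real.rpow_one]
    have e2 : (fun ω => (∑ i : Fin 1, |(![g] i) ω| ^ q) ^ (1 / q)) = fun ω => |g ω| := by
      funext ω
      simp only [Fin.sum_univ_one, Matrix.cons_val_zero]
      rw [← Real.rpow_mul (abs_nonneg _), mul_one_div_cancel hq0, Real.rpow_one]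
    rw [e1, e2] at h1
    have e3 : eLpNorm (fun ω' => |(A g) ω'|) v ν = eLpNorm (⇑(A g)) v ν := by
      simpa [Real.norm_eq_abs] using eLpNorm_norm (μ := ν) (p := v) (⇑(A g))
    have e4 : eLpNorm (fun ω => |g ω|) u μ = eLpNorm (⇑g) u μ := by
      simpa [Real.norm_eq_abs] using eLpNorm_norm (μ := μ) (p := u) (⇑g)
    rw [e3, e4, hLpv, hLpu, ← ENNReal.ofReal_mul hK] at h1
    exact (ENNReal.ofReal_le_ofReal_iff (by positivity)).1 h1
  -- Step B: T is Cauchy in operator norm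
  have hC : CauchySeq T := by
    rw [Metric.cauchySeq_iff']
    intro ε hε
    obtain ⟨N, hN⟩ := hcauchy (ε/2) (by linarith)
    refine ⟨N, fun m hm => ?_⟩
    have hb : ‖T m - T N‖ ≤ ε/2 := ContinuousLinearMap.opNorm_le_bound _ (by linarith)
      (hnorm (T m - T N) (ε/2) (by linarith) (hN m N hm le_rfl))
    calc dist (T m) (T N) = ‖T m - T N‖ := dist_eq_norm _ _
      _ ≤ ε/2 := hb
      _ < ε := by linarith
  obtain ⟨S, hSt⟩ := cauchySeq_tendsto_of_complete hC
  -- general bound on Φ via operator norm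
  have hΦb : ∀ (A : Lp ℝ u μ →L[ℝ] Lp ℝ v ν) (n : ℕ) (f : Fin n → Lp ℝ u μ),
      eLpNorm (fun ω' => (∑ i, |A (f i) ω'| ^ p) ^ (1 / p)) v ν ≤
        ENNReal.ofReal (‖A‖ * ∑ i, ‖f i‖) := by
    intro A n f
    refine (aux_Phi_le_sum hv (fun i => Lp.aestronglyMeasurable (A (f i))) hp).trans ?_
    calc ∑ i, eLpNorm (⇑(A (f i))) v ν = ∑ i, ENNReal.ofReal ‖A (f i)‖ :=
          Finset.sum_congr rfl fun i _ => hLpv _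
      _ ≤ ∑ i, ENNReal.ofReal (‖A‖ * ‖f i‖) := Finset.sum_le_sum fun i _ =>
          ENNReal.ofReal_le_ofReal (A.le_opNorm (f i))
      _ = ENNReal.ofReal (∑ i, ‖A‖ * ‖f i‖) :=
          (ENNReal.ofReal_sum_of_nonneg fun i _ => by positivity).symm
      _ = ENNReal.ofReal (‖A‖ * ∑ i, ‖f i‖) := by rw [Finset.mul_sum]
  -- triangle inequality for Φ at the operator level
  have hΦadd : ∀ (A B : Lp ℝ u μ →L[ℝ] Lp ℝ v ν) (n : ℕ) (f : Fin n → Lp ℝ u μ),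
      eLpNorm (fun ω' => (∑ i, |(A + B) (f i) ω'| ^ p) ^ (1 / p)) v ν ≤
        eLpNorm (fun ω' => (∑ i, |A (f i) ω'| ^ p) ^ (1 / p)) v ν +
          eLpNorm (fun ω' => (∑ i, |B (f i) ω'| ^ p) ^ (1 / p)) v ν := by
    intro A B n f
    have hae : ∀ᵐ ω' ∂ν, ∀ i, ((A + B) (f i)) ω' = (A (f i)) ω' + (B (f i)) ω' := by
      rw [ae_all_iff]
      intro i
      have he : (A + B) (f i) = A (f i) + B (f i) := rfl
      rw [he]
      filter_upwards [Lp.coeFn_add (A (f i)) (B (f i))] with ω hω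
      simpa using hω
    have hcong : eLpNorm (fun ω' => (∑ i, |(A + B) (f i) ω'| ^ p) ^ (1 / p)) v ν =
        eLpNorm (fun ω' => (∑ i, |(A (f i)) ω' + (B (f i)) ω'| ^ p) ^ (1 / p)) v ν := by
      apply eLpNorm_congr_ae
      filter_upwards [hae] with ω hω
      simp only [hω]
    rw [hcong]
    exact aux_Phi_add hv (fun i => Lp.aestronglyMeasurable (A (f i)))
      (fun i => Lp.aestronglyMeasurable (B (f i))) hp
  -- Step C: the residual terms become small
  have hres : ∀ (δ : ℝ), 0 < δ → ∀ (n : ℕ) (f : Fin n → Lp ℝ u μ), ∃ N : ℕ, ∀ k, N ≤ k →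
      eLpNorm (fun ω' => (∑ i, |(T k - S) (f i) ω'| ^ p) ^ (1 / p)) v ν ≤ ENNReal.ofReal δ ∧
      eLpNorm (fun ω' => (∑ i, |(S - T k) (f i) ω'| ^ p) ^ (1 / p)) v ν ≤ ENNReal.ofReal δ := by
    intro δ hδ n f
    set C := ∑ i, ‖f i‖ with hCdef
    have hC0 : 0 ≤ C := Finset.sum_nonneg fun i _ => norm_nonneg _
    rw [Metric.tendsto_atTop] at hSt
    obtain ⟨N, hN⟩ := hSt (δ/(C+1)) (by positivity)
    refine ⟨N, fun k hk => ?_⟩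
    have hball : ‖T k - S‖ * C ≤ δ := by
      have h1 : ‖T k - S‖ < δ/(C+1) := by rw [← dist_eq_norm]; exact hN k hk
      calc ‖T k - S‖ * C ≤ δ/(C+1) * C := mul_le_mul_of_nonneg_right h1.le hC0
        _ ≤ δ := by rw [div_mul_eq_mul_div, div_le_iff₀ (by linarith)]; nlinarith
    constructor
    · exact (hΦb (T k - S) n f).trans (ENNReal.ofReal_le_ofReal hball)
    · refine (hΦb (S - T k) n f).trans (ENNReal.ofReal_le_ofReal ?_)
      rw [norm_sub_rev]; exact hball
  obtain ⟨N₁, hN₁⟩ := hcauchy 1 one_pos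
  obtain ⟨K, hK0, hKreg⟩ := hreg N₁
  refine ⟨S, ⟨K + 1, by linarith, ?_⟩, ?_⟩
  · -- S is (p,q)-regular with constant K + 1
    intro n f
    set Ψ := eLpNorm (fun ω => (∑ i, |f i ω| ^ q) ^ (1 / q)) u μ with hΨ
    apply ENNReal.le_of_forall_pos_le_add
    intro δ hδ _
    obtain ⟨N₂, hN₂⟩ := hres δ (by exact_mod_cast hδ) n f
    set k := max N₁ N₂ with hkdef
    have h1 := hΦadd (S - T k) (T k) n f
    rw [sub_add_cancel] at h1
    have h2 := hΦadd (T k - T N₁) (T N₁) n f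
    rw [sub_add_cancel] at h2
    have h3 : eLpNorm (fun ω' => (∑ i, |(T k - T N₁) (f i) ω'| ^ p) ^ (1 / p)) v ν ≤
        ENNReal.ofReal 1 * Ψ := hN₁ k N₁ (le_max_left _ _) le_rfl n f
    have h4 : eLpNorm (fun ω' => (∑ i, |(T N₁) (f i) ω'| ^ p) ^ (1 / p)) v ν ≤
        ENNReal.ofReal K * Ψ := hKreg n f
    have h5 : eLpNorm (fun ω' => (∑ i, |(S - T k) (f i) ω'| ^ p) ^ (1 / p)) v ν ≤
        ENNReal.ofReal δ := (hN₂ k (le_max_right _ _)).2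
    have hmerge : ENNReal.ofReal 1 * Ψ + ENNReal.ofReal K * Ψ = ENNReal.ofReal (K + 1) * Ψ := by
      rw [← add_mul, ← ENNReal.ofReal_add (by norm_num) hK0, add_comm (1:ℝ) K]
    calc eLpNorm (fun ω' => (∑ i, |S (f i) ω'| ^ p) ^ (1 / p)) v ν
        ≤ eLpNorm (fun ω' => (∑ i, |(S - T k) (f i) ω'| ^ p) ^ (1 / p)) v ν +
          eLpNorm (fun ω' => (∑ i, |(T k) (f i) ω'| ^ p) ^ (1 / p)) v ν := h1
      _ ≤ ENNReal.ofReal δ + (ENNReal.ofReal 1 * Ψ + ENNReal.ofReal K * Ψ) :=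
          add_le_add h5 (h2.trans (add_le_add h3 h4))
      _ = ENNReal.ofReal (K + 1) * Ψ + ENNReal.ofReal δ := by rw [hmerge, add_comm]
      _ = ENNReal.ofReal (K + 1) * Ψ + δ := by rw [ENNReal.ofReal_coe_nnreal]
  · -- convergence in the regularity norm
    intro ε hε
    obtain ⟨N, hN⟩ := hcauchy (ε/2) (by linarith)
    refine ⟨N, fun m hm => ?_⟩
    intro n f
    set Ψ := eLpNorm (fun ω => (∑ i, |f i ω| ^ q) ^ (1 / q)) u μ with hΨ
    have hhalf : eLpNorm (fun ω' => (∑ i, |(T m - S) (f i) ω'| ^ p) ^ (1 / p)) v ν ≤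
        ENNReal.ofReal (ε/2) * Ψ := by
      apply ENNReal.le_of_forall_pos_le_add
      intro δ hδ _
      obtain ⟨N₂, hN₂⟩ := hres δ (by exact_mod_cast hδ) n f
      set k := max N N₂ with hkdef
      have h1 := hΦadd (T m - T k) (T k - S) n f
      rw [sub_add_sub_cancel] at h1
      have h2 : eLpNorm (fun ω' => (∑ i, |(T m - T k) (f i) ω'| ^ p) ^ (1 / p)) v ν ≤
          ENNReal.ofReal (ε/2) * Ψ := hN m k hm (le_max_left _ _) n f
      have h3 : eLpNorm (fun ω' => (∑ i, |(T k - S) (f i) ω'| ^ p) ^ (1 / p)) v ν ≤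
          ENNReal.ofReal δ := (hN₂ k (le_max_right _ _)).1
      calc eLpNorm (fun ω' => (∑ i, |(T m - S) (f i) ω'| ^ p) ^ (1 / p)) v ν
          ≤ eLpNorm (fun ω' => (∑ i, |(T m - T k) (f i) ω'| ^ p) ^ (1 / p)) v ν +
            eLpNorm (fun ω' => (∑ i, |(T k - S) (f i) ω'| ^ p) ^ (1 / p)) v ν := h1
        _ ≤ ENNReal.ofReal (ε/2) * Ψ + ENNReal.ofReal δ := add_le_add h2 h3
        _ = ENNReal.ofReal (ε/2) * Ψ + δ := by rw [ENNReal.ofReal_coe_nnreal]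
    exact hhalf.trans (mul_le_mul_left (ENNReal.ofReal_le_ofReal (by linarith)) Ψ)
end

section
/- Let $(\Omega,\Sigma,\mu)$ and $(\Omega',\Sigma',\nu)$ be measure spaces and $1 \le r \le t < \infty$. Then every bounded linear operator $T : L^r(\mu) \to L^t(\nu)$ is $(t,r)$-regular with constant $\|T\|$, i.e. $\|(\sum_{i=1}^n |Tf_i|^t)^{1/t}\|_{L^t(\nu)} \le \|T\| \, \|(\sum_{i=1}^n |f_i|^r)^{1/r}\|_{L^r(\mu)}$ for every finite family $f_1,\dots,f_n \in L^r(\mu)$. -/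
open MeasureTheory ENNReal

private lemma aux_sum_rpow_le {ι : Type*} (s : Finset ι) (b : ι → ℝ≥0∞) {c : ℝ}
    (hc : 1 ≤ c) : ∑ i ∈ s, b i ^ c ≤ (∑ i ∈ s, b i) ^ c := by
  have hc1 : (0:ℝ) ≤ c - 1 := by linarith
  have h2 : (∑ j ∈ s, b j) ^ (c - 1) * (∑ j ∈ s, b j) ^ (1:ℝ) = (∑ j ∈ s, b j) ^ c := by
    rw [← ENNReal.rpow_add_of_nonneg _ _ hc1 zero_le_one]; ring_nf
  calc ∑ i ∈ s, b i ^ c ≤ ∑ i ∈ s, (∑ j ∈ s, b j) ^ (c - 1) * b i := by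
        refine Finset.sum_le_sum fun i hi => ?_
        have : b i ^ c = b i ^ (c - 1) * b i ^ (1:ℝ) := by
          rw [← ENNReal.rpow_add_of_nonneg _ _ hc1 zero_le_one]; ring_nf
        rw [this, ENNReal.rpow_one]
        exact mul_le_mul_left
          (ENNReal.rpow_le_rpow (Finset.single_le_sum (fun _ _ => zero_le) hi) hc1) _
    _ = (∑ j ∈ s, b j) ^ (c - 1) * ∑ i ∈ s, b i := by rw [← Finset.mul_sum]
    _ = (∑ j ∈ s, b j) ^ c := by rw [← h2, ENNReal.rpow_one]

private lemma aux_eLpNorm_sum {α ι : Type*} [MeasurableSpace α] (μ : Measure α)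
    (s : Finset ι) (g : ι → α → ℝ) (hg : ∀ i, AEStronglyMeasurable (g i) μ)
    {c : ℝ} (hc : 1 ≤ c) :
    eLpNorm (fun ω => (∑ i ∈ s, |g i ω| ^ c) ^ (1 / c)) (ENNReal.ofReal c) μ =
      (∑ i ∈ s, eLpNorm (g i) (ENNReal.ofReal c) μ ^ c) ^ (1 / c) := by
  have hc0 : (0:ℝ) < c := lt_of_lt_of_le one_pos hc
  have hp0 : ENNReal.ofReal c ≠ 0 := by simp [ENNReal.ofReal_eq_zero, not_le, hc0]
  have hpt : ENNReal.ofReal c ≠ ∞ := ENNReal.ofReal_ne_top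
  have htr : (ENNReal.ofReal c).toReal = c := ENNReal.toReal_ofReal hc0.le
  have hpt2 : ∀ ω, ((‖(∑ i ∈ s, |g i ω| ^ c) ^ (1 / c)‖₊ : ℝ≥0∞)) ^ c =
      ∑ i ∈ s, ((‖g i ω‖₊ : ℝ≥0∞)) ^ c := by
    intro ω
    have hS : (0:ℝ) ≤ ∑ i ∈ s, |g i ω| ^ c :=
      Finset.sum_nonneg fun i _ => Real.rpow_nonneg (abs_nonneg _) _
    have h1 : (‖(∑ i ∈ s, |g i ω| ^ c) ^ (1 / c)‖₊ : ℝ≥0∞) =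
        ENNReal.ofReal ((∑ i ∈ s, |g i ω| ^ c) ^ (1 / c)) := by
      rw [← enorm_eq_nnnorm, ← ofReal_norm, Real.norm_eq_abs,
        abs_of_nonneg (Real.rpow_nonneg hS _)]
    rw [h1, ENNReal.ofReal_rpow_of_nonneg (Real.rpow_nonneg hS _) hc0.le,
      ← Real.rpow_mul hS, one_div_mul_cancel hc0.ne', Real.rpow_one,
      ENNReal.ofReal_sum_of_nonneg fun i _ => Real.rpow_nonneg (abs_nonneg _) _]
    refine Finset.sum_congr rfl fun i _ => ?_
    rw [← ENNReal.ofReal_rpow_of_nonneg (abs_nonneg _) hc0.le,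
      ← enorm_eq_nnnorm, ← ofReal_norm, Real.norm_eq_abs]
  rw [eLpNorm_eq_lintegral_rpow_enorm_toReal hp0 hpt, htr]
  simp only [enorm_eq_nnnorm, hpt2]
  rw [lintegral_finset_sum' s (f := fun i x => (‖g i x‖₊ : ℝ≥0∞) ^ c)
    fun i _ => ((hg i).enorm.pow_const c)]
  congr 1
  refine Finset.sum_congr rfl fun i _ => ?_
  rw [eLpNorm_eq_lintegral_rpow_enorm_toReal hp0 hpt, htr, ← ENNReal.rpow_mul,
    one_div_mul_cancel hc0.ne', ENNReal.rpow_one]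
  rfl

/-- For `1 ≤ r ≤ t < ∞`, every bounded linear operator `T : L^r(μ) → L^t(ν)`
is `(t,r)`-regular with constant `‖T‖`. -/
theorem stmt5 {Ω Ω' : Type*} [MeasurableSpace Ω] [MeasurableSpace Ω']
    (μ : Measure Ω) (ν : Measure Ω')
    (r t : ℝ) (hr : 1 ≤ r) (hrt : r ≤ t)
    [Fact (1 ≤ ENNReal.ofReal r)] [Fact (1 ≤ ENNReal.ofReal t)]
    (T : Lp ℝ (ENNReal.ofReal r) μ →L[ℝ] Lp ℝ (ENNReal.ofReal t) ν) :
    IsPQRegular (⇑T) t r ‖T‖ := by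
  intro n f
  have ht1 : (1:ℝ) ≤ t := hr.trans hrt
  have hr0 : (0:ℝ) < r := lt_of_lt_of_le one_pos hr
  have ht0 : (0:ℝ) < t := lt_of_lt_of_le one_pos ht1
  have hN : ∀ (h : Lp ℝ (ENNReal.ofReal t) ν),
      eLpNorm (⇑h) (ENNReal.ofReal t) ν = (‖h‖₊ : ℝ≥0∞) := fun h => by
    rw [Lp.nnnorm_def, ENNReal.coe_toNNReal (Lp.eLpNorm_ne_top h)]
  have hM : ∀ (h : Lp ℝ (ENNReal.ofReal r) μ),
      eLpNorm (⇑h) (ENNReal.ofReal r) μ = (‖h‖₊ : ℝ≥0∞) := fun h => by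
    rw [Lp.nnnorm_def, ENNReal.coe_toNNReal (Lp.eLpNorm_ne_top h)]
  rw [aux_eLpNorm_sum ν Finset.univ (fun i => ⇑(T (f i)))
      (fun i => Lp.aestronglyMeasurable _) ht1,
    aux_eLpNorm_sum μ Finset.univ (fun i => ⇑(f i))
      (fun i => Lp.aestronglyMeasurable _) hr]
  set C : ℝ≥0∞ := ENNReal.ofReal ‖T‖ with hC
  have hCnn : C = (‖T‖₊ : ℝ≥0∞) := ofReal_norm T
  set B : ℝ≥0∞ := ∑ i, eLpNorm (⇑(f i)) (ENNReal.ofReal r) μ ^ r with hB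
  have hb : ∀ i, eLpNorm (⇑(T (f i))) (ENNReal.ofReal t) ν ≤
      C * eLpNorm (⇑(f i)) (ENNReal.ofReal r) μ := fun i => by
    rw [hN, hM, hCnn, ← ENNReal.coe_mul]
    exact ENNReal.coe_le_coe.mpr (T.le_opNNNorm (f i))
  have key : ∑ i, eLpNorm (⇑(T (f i))) (ENNReal.ofReal t) ν ^ t ≤ C ^ t * B ^ (t / r) :=
    calc ∑ i, eLpNorm (⇑(T (f i))) (ENNReal.ofReal t) ν ^ t
        ≤ ∑ i, (C * eLpNorm (⇑(f i)) (ENNReal.ofReal r) μ) ^ t :=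
          Finset.sum_le_sum fun i _ => ENNReal.rpow_le_rpow (hb i) ht0.le
      _ = C ^ t * ∑ i, eLpNorm (⇑(f i)) (ENNReal.ofReal r) μ ^ t := by
          simp_rw [ENNReal.mul_rpow_of_nonneg _ _ ht0.le]
          rw [← Finset.mul_sum]
      _ ≤ C ^ t * B ^ (t / r) := by
          refine mul_le_mul_right ?_ _
          have h1 : ∀ i : Fin n, eLpNorm (⇑(f i)) (ENNReal.ofReal r) μ ^ t =
              (eLpNorm (⇑(f i)) (ENNReal.ofReal r) μ ^ r) ^ (t / r) := fun i => by
            rw [← ENNReal.rpow_mul]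
            congr 1
            field_simp
          simp_rw [h1]
          exact aux_sum_rpow_le _ _ ((one_le_div hr0).mpr hrt)
  calc (∑ i, eLpNorm (⇑(T (f i))) (ENNReal.ofReal t) ν ^ t) ^ (1 / t)
      ≤ (C ^ t * B ^ (t / r)) ^ (1 / t) :=
        ENNReal.rpow_le_rpow key (by positivity)
    _ = C * B ^ (1 / r) := by
        rw [ENNReal.mul_rpow_of_nonneg _ _ (by positivity), ← ENNReal.rpow_mul,
          ← ENNReal.rpow_mul]
        have e1 : t * (1 / t) = 1 := by field_simp
        have e2 : t / r * (1 / t) = 1 / r := by field_simp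
        rw [e1, e2, ENNReal.rpow_one]
end

section
/- (Hölder inequality for vector expressions.) Let $(\Omega,\Sigma,\mu)$ be a measure space, $1 \le u \le \infty$ with conjugate exponent $u'$ ($1/u + 1/u' = 1$), and $1 \le r \le p, s < \infty$ with $1/r = 1/p + 1/s$. Then for all finite families $f_1,\dots,f_n \in L^u(\mu)$ and $g_1,\dots,g_n \in L^{u'}(\mu)$: $\int_{\Omega} \big(\sum_{i=1}^n |f_i g_i|^r\big)^{1/r} \, d\mu \le \big\|(\sum_{i=1}^n |f_i|^p)^{1/p}\big\|_{L^u(\mu)} \cdot \big\|(\sum_{i=1}^n |g_i|^s)^{1/s}\big\|_{L^{u'}(\mu)}$. -/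
open MeasureTheory ENNReal

/-- Pointwise (finite-dimensional) Hölder inequality with three exponents. -/
lemma ptwise_holder {n : ℕ} (r p s : ℝ) (hr : 1 ≤ r) (hrp : r ≤ p) (hrs : r ≤ s)
    (hc : 1 / r = 1 / p + 1 / s) (a b : Fin n → ℝ) :
    (∑ i, |a i * b i| ^ r) ^ (1 / r) ≤
      (∑ i, |a i| ^ p) ^ (1 / p) * (∑ i, |b i| ^ s) ^ (1 / s) := by
  have hr0 : 0 < r := lt_of_lt_of_le one_pos hr
  have hp0 : 0 < p := lt_of_lt_of_le hr0 hrp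
  have hs0 : 0 < s := lt_of_lt_of_le hr0 hrs
  have hrpl : r < p := by
    rcases lt_or_eq_of_le hrp with h | h
    · exact h
    · exfalso
      rw [h] at hc
      have : 1 / s = 0 := by linarith
      have : (0:ℝ) < 1 / s := by positivity
      linarith
  have hconj : Real.HolderConjugate (p / r) (s / r) := by
    rw [Real.holderConjugate_iff]
    constructor
    · rw [lt_div_iff₀ hr0, one_mul]; exact hrpl
    · rw [inv_div, inv_div]
      field_simp at hc ⊢
      nlinarith [hc]
  have key : ∑ i, |a i * b i| ^ r ≤
      (∑ i, |a i| ^ p) ^ (r / p) * (∑ i, |b i| ^ s) ^ (r / s) := by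
    have H := Real.inner_le_Lp_mul_Lq (s := Finset.univ)
      (fun i => |a i| ^ r) (fun i => |b i| ^ r) hconj
    have habs : ∀ (x : ℝ) (t : ℝ), abs (|x| ^ t) = |x| ^ t := fun x t =>
      abs_of_nonneg (Real.rpow_nonneg (abs_nonneg x) t)
    have e1 : ∀ x : ℝ, (|x| ^ r) ^ (p / r) = |x| ^ p := fun x => by
      rw [← Real.rpow_mul (abs_nonneg x)]
      congr 1; field_simp
    have e2 : ∀ x : ℝ, (|x| ^ r) ^ (s / r) = |x| ^ s := fun x => by
      rw [← Real.rpow_mul (abs_nonneg x)]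
      congr 1; field_simp
    simp only [habs, e1, e2, one_div_div] at H
    calc ∑ i, |a i * b i| ^ r = ∑ i, |a i| ^ r * |b i| ^ r := by
          simp_rw [abs_mul, Real.mul_rpow (abs_nonneg _) (abs_nonneg _)]
      _ ≤ _ := H
  calc (∑ i, |a i * b i| ^ r) ^ (1 / r)
      ≤ ((∑ i, |a i| ^ p) ^ (r / p) * (∑ i, |b i| ^ s) ^ (r / s)) ^ (1 / r) := by
        apply Real.rpow_le_rpow _ key (by positivity)
        exact Finset.sum_nonneg fun i _ => Real.rpow_nonneg (abs_nonneg _) _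
    _ = (∑ i, |a i| ^ p) ^ (1 / p) * (∑ i, |b i| ^ s) ^ (1 / s) := by
        rw [Real.mul_rpow (Real.rpow_nonneg (Finset.sum_nonneg fun i _ =>
            Real.rpow_nonneg (abs_nonneg _) _) _)
          (Real.rpow_nonneg (Finset.sum_nonneg fun i _ =>
            Real.rpow_nonneg (abs_nonneg _) _) _),
          ← Real.rpow_mul (Finset.sum_nonneg fun i _ => Real.rpow_nonneg (abs_nonneg _) _),
          ← Real.rpow_mul (Finset.sum_nonneg fun i _ => Real.rpow_nonneg (abs_nonneg _) _)]
        congr 2 <;> field_simp <;> ring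

/-- Hölder's inequality for vector expressions: for `1/u + 1/u' = 1` and
`1/r = 1/p + 1/s`,
`∫ (∑ᵢ |fᵢ gᵢ|^r)^(1/r) dμ ≤ ‖(∑ᵢ |fᵢ|^p)^(1/p)‖_u ‖(∑ᵢ |gᵢ|^s)^(1/s)‖_{u'}`. -/
theorem stmt6 {Ω : Type*} [MeasurableSpace Ω] (μ : Measure Ω)
    (u u' : ℝ≥0∞) (hu : 1 ≤ u) (huu' : 1 / u + 1 / u' = 1)
    (r p s : ℝ) (hr : 1 ≤ r) (hrp : r ≤ p) (hrs : r ≤ s)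
    (hc : 1 / r = 1 / p + 1 / s)
    (n : ℕ) (f : Fin n → Lp ℝ u μ) (g : Fin n → Lp ℝ u' μ) :
    ∫⁻ ω, ENNReal.ofReal ((∑ i, |f i ω * g i ω| ^ r) ^ (1 / r)) ∂μ ≤
      eLpNorm (fun ω => (∑ i, |f i ω| ^ p) ^ (1 / p)) u μ *
        eLpNorm (fun ω => (∑ i, |g i ω| ^ s) ^ (1 / s)) u' μ := by
  have hr0 : 0 < r := lt_of_lt_of_le one_pos hr
  have hp0 : 0 < p := lt_of_lt_of_le hr0 hrp
  have hs0 : 0 < s := lt_of_lt_of_le hr0 hrs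
  set F : Ω → ℝ := fun ω => (∑ i, |f i ω| ^ p) ^ (1 / p) with hF_def
  set G : Ω → ℝ := fun ω => (∑ i, |g i ω| ^ s) ^ (1 / s) with hG_def
  have hF : AEStronglyMeasurable F μ := by
    apply (Real.continuous_rpow_const (by positivity)).comp_aestronglyMeasurable
    apply Finset.aestronglyMeasurable_fun_sum
    intro i _
    exact ((Real.continuous_rpow_const hp0.le).comp continuous_abs).comp_aestronglyMeasurable
      (Lp.aestronglyMeasurable (f i))
  have hG : AEStronglyMeasurable G μ := by
    apply (Real.continuous_rpow_const (by positivity)).comp_aestronglyMeasurable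
    apply Finset.aestronglyMeasurable_fun_sum
    intro i _
    exact ((Real.continuous_rpow_const hs0.le).comp continuous_abs).comp_aestronglyMeasurable
      (Lp.aestronglyMeasurable (g i))
  have step1 : ∫⁻ ω, ENNReal.ofReal ((∑ i, |f i ω * g i ω| ^ r) ^ (1 / r)) ∂μ
      = eLpNorm (fun ω => (∑ i, |f i ω * g i ω| ^ r) ^ (1 / r)) 1 μ := by
    rw [eLpNorm_one_eq_lintegral_enorm]
    congr 1
    ext ω
    rw [← ofReal_norm, Real.norm_of_nonneg]
    positivity
  rw [step1]
  calc eLpNorm (fun ω => (∑ i, |f i ω * g i ω| ^ r) ^ (1 / r)) 1 μ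
      ≤ eLpNorm (fun ω => F ω * G ω) 1 μ := by
        apply eLpNorm_mono
        intro ω
        have h1 : (0:ℝ) ≤ (∑ i, |f i ω * g i ω| ^ r) ^ (1 / r) := by positivity
        have h2 : (0:ℝ) ≤ F ω * G ω := by
          apply mul_nonneg <;> positivity
        rw [Real.norm_of_nonneg h1, Real.norm_of_nonneg h2]
        exact ptwise_holder r p s hr hrp hrs hc (fun i => f i ω) (fun i => g i ω)
    _ ≤ eLpNorm F u μ * eLpNorm G u' μ := by
        have hT : ENNReal.HolderTriple u u' 1 := ⟨by simpa using huu'⟩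
        refine le_of_le_of_eq (eLpNorm_le_eLpNorm_mul_eLpNorm'_of_norm (p := u) (q := u') hF hG (· * ·) 1 ?_) (by simp)
        · exact Filter.Eventually.of_forall fun x => by simp [norm_mul]
end

section
/- (Duality formula.) Let $(\Omega,\Sigma,\mu)$ be a $\sigma$-finite measure space, $1 \le u < \infty$ with conjugate exponent $u'$, and $1 \le r \le p, s < \infty$ with $1/r = 1/p + 1/s$. Then for every finite family $f_1,\dots,f_n \in L^u(\mu)$: $\big\|(\sum_{i=1}^n |f_i|^p)^{1/p}\big\|_{L^u(\mu)} = \sup \Big\{ \int_{\Omega} \big(\sum_{i=1}^n |f_i g_i|^r\big)^{1/r} d\mu \ : \ g_1,\dots,g_n \in L^{u'}(\mu), \ \big\|(\sum_{i=1}^n |g_i|^s)^{1/s}\big\|_{L^{u'}(\mu)} \le 1 \Big\}$. -/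
open MeasureTheory ENNReal

lemma holder_fin {n : ℕ} (a b : Fin n → ℝ) {r p s : ℝ} (hr0 : 0 < r) (hrp : r < p) (hrs : r < s)
    (hc : 1 / r = 1 / p + 1 / s) :
    (∑ i, |a i * b i| ^ r) ^ (1/r) ≤ (∑ i, |a i| ^ p) ^ (1/p) * (∑ i, |b i| ^ s) ^ (1/s) := by
  have hp0 : 0 < p := hr0.trans hrp
  have hs0 : 0 < s := hr0.trans hrs
  have hconj : (p/r).HolderConjugate (s/r) := by
    rw [Real.holderConjugate_iff]
    constructor
    · exact (one_lt_div hr0).2 hrp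
    · field_simp
      field_simp at hc
      nlinarith [hc]
  have key : ∑ i, |a i * b i| ^ r ≤ (∑ i, |a i| ^ p) ^ (r/p) * (∑ i, |b i| ^ s) ^ (r/s) := by
    have h := Real.inner_le_Lp_mul_Lq Finset.univ (fun i => |a i| ^ r) (fun i => |b i| ^ r) hconj
    calc ∑ i, |a i * b i| ^ r = ∑ i, |a i| ^ r * |b i| ^ r := by
          refine Finset.sum_congr rfl fun i _ => ?_
          rw [abs_mul, Real.mul_rpow (abs_nonneg _) (abs_nonneg _)]
      _ ≤ (∑ i, (abs (|a i| ^ r)) ^ (p/r)) ^ (1/(p/r)) * (∑ i, (abs (|b i| ^ r)) ^ (s/r)) ^ (1/(s/r)) := h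
      _ = (∑ i, |a i| ^ p) ^ (r/p) * (∑ i, |b i| ^ s) ^ (r/s) := by
          rw [one_div_div, one_div_div]
          congr 2 <;> refine Finset.sum_congr rfl fun i _ => ?_ <;>
            rw [abs_of_nonneg (Real.rpow_nonneg (abs_nonneg _) _),
              ← Real.rpow_mul (abs_nonneg _)] <;>
            rw [mul_div_cancel₀ _ hr0.ne']
  have hsum_ab : (0:ℝ) ≤ ∑ i, |a i * b i| ^ r :=
    Finset.sum_nonneg fun i _ => Real.rpow_nonneg (abs_nonneg _) _
  have hA : (0:ℝ) ≤ ∑ i, |a i| ^ p :=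
    Finset.sum_nonneg fun i _ => Real.rpow_nonneg (abs_nonneg _) _
  have hB : (0:ℝ) ≤ ∑ i, |b i| ^ s :=
    Finset.sum_nonneg fun i _ => Real.rpow_nonneg (abs_nonneg _) _
  calc (∑ i, |a i * b i| ^ r) ^ (1/r)
      ≤ ((∑ i, |a i| ^ p) ^ (r/p) * (∑ i, |b i| ^ s) ^ (r/s)) ^ (1/r) :=
        Real.rpow_le_rpow hsum_ab key (by positivity)
    _ = (∑ i, |a i| ^ p) ^ (1/p) * (∑ i, |b i| ^ s) ^ (1/s) := by
        rw [Real.mul_rpow (Real.rpow_nonneg hA _) (Real.rpow_nonneg hB _),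
          ← Real.rpow_mul hA, ← Real.rpow_mul hB]
        rw [show r/p * (1/r) = 1/p by field_simp, show r/s * (1/r) = 1/s by field_simp]


/-- Duality formula: for a σ-finite measure, `1 ≤ u < ∞` with conjugate `u'`
and `1/r = 1/p + 1/s`, the norm `‖(∑ᵢ |fᵢ|^p)^(1/p)‖_u` equals the supremum of
`∫ (∑ᵢ |fᵢ gᵢ|^r)^(1/r) dμ` over families `g` with
`‖(∑ᵢ |gᵢ|^s)^(1/s)‖_{u'} ≤ 1`. -/
theorem stmt7 {Ω : Type*} [MeasurableSpace Ω] (μ : Measure Ω) [SigmaFinite μ]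
    (u u' : ℝ≥0∞) (hu : 1 ≤ u) (hu_top : u ≠ ∞) (huu' : 1 / u + 1 / u' = 1)
    (r p s : ℝ) (hr : 1 ≤ r) (hrp : r ≤ p) (hrs : r ≤ s)
    (hc : 1 / r = 1 / p + 1 / s)
    (n : ℕ) (f : Fin n → Lp ℝ u μ) :
    eLpNorm (fun ω => (∑ i, |f i ω| ^ p) ^ (1 / p)) u μ =
      ⨆ (g : Fin n → Lp ℝ u' μ)
        (_ : eLpNorm (fun ω => (∑ i, |g i ω| ^ s) ^ (1 / s)) u' μ ≤ 1),
        ∫⁻ ω, ENNReal.ofReal ((∑ i, |f i ω * g i ω| ^ r) ^ (1 / r)) ∂μ := by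
  -- numeric facts
  have hr0 : 0 < r := lt_of_lt_of_le one_pos hr
  have hp0 : 0 < p := lt_of_lt_of_le hr0 hrp
  have hs0 : 0 < s := lt_of_lt_of_le hr0 hrs
  have hrp' : r < p := by
    have h1 : 1 / p < 1 / r := by rw [hc]; linarith [one_div_pos.mpr hs0]
    rw [div_lt_div_iff₀ hp0 hr0] at h1; linarith
  have hrs' : r < s := by
    have h1 : 1 / s < 1 / r := by rw [hc]; linarith [one_div_pos.mpr hp0]
    rw [div_lt_div_iff₀ hs0 hr0] at h1; linarith
  have hprs : p / r = 1 + p / s := by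
    field_simp
    field_simp at hc
    nlinarith [hc]
  have hu0 : u ≠ 0 := (zero_lt_one.trans_le hu).ne'
  set t := u.toReal with ht_def
  have ht1 : 1 ≤ t := by
    have := ENNReal.toReal_mono hu_top hu
    simpa using this
  have ht0 : 0 < t := lt_of_lt_of_le one_pos ht1
  -- the function F
  set F : Ω → ℝ := fun ω => (∑ i, |f i ω| ^ p) ^ (1 / p) with hF_def
  have hF0 : ∀ ω, 0 ≤ F ω := fun ω =>
    Real.rpow_nonneg (Finset.sum_nonneg fun i _ => Real.rpow_nonneg (abs_nonneg _) _) _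
  have hfi : ∀ i : Fin n, AEMeasurable (fun ω => f i ω) μ := fun i =>
    (Lp.aestronglyMeasurable (f i)).aemeasurable
  have hFaem : AEMeasurable F μ := by
    have hsum : AEMeasurable (fun ω => ∑ i, |f i ω| ^ p) μ := by
      apply Finset.aemeasurable_fun_sum
      intro i _
      fun_prop
    fun_prop
  have hFs : AEStronglyMeasurable F μ := hFaem.aestronglyMeasurable
  -- F is in L^u
  have hFle : ∀ ω, F ω ≤ (n : ℝ) ^ (1/p) * ∑ j, |f j ω| := by
    intro ω
    have hsn : (0:ℝ) ≤ ∑ j, |f j ω| := Finset.sum_nonneg fun j _ => abs_nonneg _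
    have h1 : ∑ i, |f i ω| ^ p ≤ (n : ℝ) * (∑ j, |f j ω|) ^ p := by
      calc ∑ i, |f i ω| ^ p ≤ ∑ _i : Fin n, (∑ j, |f j ω|) ^ p :=
            Finset.sum_le_sum fun i _ => Real.rpow_le_rpow (abs_nonneg _)
              (Finset.single_le_sum (f := fun j => |f j ω|) (fun j _ => abs_nonneg _) (Finset.mem_univ i)) hp0.le
        _ = (n : ℝ) * (∑ j, |f j ω|) ^ p := by
            simp [Finset.sum_const, nsmul_eq_mul]
    calc F ω ≤ ((n : ℝ) * (∑ j, |f j ω|) ^ p) ^ (1/p) :=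
          Real.rpow_le_rpow (Finset.sum_nonneg fun i _ => Real.rpow_nonneg (abs_nonneg _) _)
            h1 (by positivity)
      _ = (n : ℝ) ^ (1/p) * ∑ j, |f j ω| := by
          rw [Real.mul_rpow (by positivity) (Real.rpow_nonneg hsn _), one_div,
            Real.rpow_rpow_inv hsn hp0.ne']
  have hFmem : MemLp F u μ := by
    have hsum_mem : MemLp (fun ω => ∑ j, |f j ω|) u μ := by
      apply memLp_finset_sum
      intro j _
      exact (Lp.memLp (f j)).abs
    have hbound_mem : MemLp (fun ω => (n : ℝ) ^ (1/p) * ∑ j, |f j ω|) u μ :=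
      hsum_mem.const_mul _
    refine hbound_mem.of_le hFs (ae_of_all _ fun ω => ?_)
    have hsn : (0:ℝ) ≤ ∑ j, |f j ω| := Finset.sum_nonneg fun j _ => abs_nonneg _
    rw [Real.norm_eq_abs, Real.norm_eq_abs, abs_of_nonneg (hF0 ω),
      abs_of_nonneg (by positivity)]
    exact hFle ω
  set c := eLpNorm F u μ with hc_def
  have hc_top : c ≠ ∞ := hFmem.2.ne
  -- Step A : every admissible g gives value at most c
  have upper : ∀ (g : Fin n → Lp ℝ u' μ),
      eLpNorm (fun ω => (∑ i, |g i ω| ^ s) ^ (1 / s)) u' μ ≤ 1 →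
      (∫⁻ ω, ENNReal.ofReal ((∑ i, |f i ω * g i ω| ^ r) ^ (1 / r)) ∂μ) ≤ c := by
    intro g hg
    set G : Ω → ℝ := fun ω => (∑ i, |g i ω| ^ s) ^ (1 / s) with hG_def
    have hgi : ∀ i : Fin n, AEMeasurable (fun ω => g i ω) μ := fun i =>
      (Lp.aestronglyMeasurable (g i)).aemeasurable
    have hGaem : AEMeasurable G μ := by
      have hsum : AEMeasurable (fun ω => ∑ i, |g i ω| ^ s) μ := by
        apply Finset.aemeasurable_fun_sum
        intro i _
        fun_prop
      fun_prop
    have hGs : AEStronglyMeasurable G μ := hGaem.aestronglyMeasurable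
    calc ∫⁻ ω, ENNReal.ofReal ((∑ i, |f i ω * g i ω| ^ r) ^ (1 / r)) ∂μ
        ≤ ∫⁻ ω, (‖F ω * G ω‖₊ : ℝ≥0∞) ∂μ := by
          refine lintegral_mono fun ω => ?_
          refine le_trans (ENNReal.ofReal_le_ofReal ?_) (Real.ofReal_le_enorm _)
          exact holder_fin (fun i => f i ω) (fun i => g i ω) hr0 hrp' hrs' hc
      _ = eLpNorm (fun ω => F ω * G ω) 1 μ := (eLpNorm_one_eq_lintegral_enorm (f := fun ω => F ω * G ω)).symm
      _ ≤ eLpNorm F u μ * eLpNorm G u' μ := by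
          haveI : ENNReal.HolderTriple u u' 1 := ⟨by simpa using huu'⟩
          have := eLpNorm_le_eLpNorm_mul_eLpNorm_of_nnnorm hFs hGs (· * ·) 1
            (Filter.Eventually.of_forall fun x => by simp [nnnorm_mul]) (p := u) (q := u') (r := 1)
          simpa using this
      _ ≤ c * 1 := mul_le_mul' le_rfl hg
      _ = c := mul_one c
  refine le_antisymm ?_ (iSup₂_le upper)
  -- Step B
  by_cases hc0 : c = 0
  · rw [hc_def] at hc0 ⊢
    rw [hc0]
    exact zero_le
  have hC0 : 0 < c.toReal := ENNReal.toReal_pos hc0 hc_top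
  set C := c.toReal with hC_def
  -- auxiliary density
  set d : Ω → ℝ := fun ω => if F ω = 0 then 0 else F ω ^ (t - 1 - p/s) / C ^ (t-1) with hd_def
  have hd0 : ∀ ω, 0 ≤ d ω := by
    intro ω
    simp only [hd_def]
    split
    · exact le_rfl
    · positivity
  have hdaem : AEMeasurable d μ := by
    have : d = (fun x : ℝ => if x = 0 then 0 else x ^ (t - 1 - p/s) / C ^ (t-1)) ∘ F := rfl
    rw [this]
    exact (Measurable.ite measurableSet_eq measurable_const
      ((measurable_id.pow measurable_const).div_const _)).comp_aemeasurable hFaem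
  set g0 : Fin n → Ω → ℝ := fun i ω => |f i ω| ^ (p/s) * d ω with hg0_def
  have hg0aem : ∀ i, AEMeasurable (g0 i) μ := by
    intro i
    have h1 := hfi i
    fun_prop
  -- pointwise identity for the constraint function
  have key1 : ∀ ω, (∑ i, |g0 i ω| ^ s) ^ (1/s) = F ω ^ (p/s) * d ω := by
    intro ω
    have habs : ∀ i : Fin n, |g0 i ω| = |f i ω| ^ (p/s) * d ω := fun i =>
      abs_of_nonneg (mul_nonneg (Real.rpow_nonneg (abs_nonneg _) _) (hd0 ω))
    have hterm : ∀ i : Fin n, |g0 i ω| ^ s = |f i ω| ^ p * d ω ^ s := by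
      intro i
      rw [habs i, Real.mul_rpow (Real.rpow_nonneg (abs_nonneg _) _) (hd0 ω),
        ← Real.rpow_mul (abs_nonneg _), div_mul_cancel₀ _ hs0.ne']
    rw [Finset.sum_congr rfl fun i _ => hterm i, ← Finset.sum_mul]
    have hsum_eq : ∑ i, |f i ω| ^ p = F ω ^ p := by
      rw [hF_def, one_div,
        Real.rpow_inv_rpow (Finset.sum_nonneg fun i _ => Real.rpow_nonneg (abs_nonneg _) _)
          hp0.ne']
    rw [hsum_eq, Real.mul_rpow (Real.rpow_nonneg (hF0 ω) _) (Real.rpow_nonneg (hd0 ω) _),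
      ← Real.rpow_mul (hF0 ω), one_div, Real.rpow_rpow_inv (hd0 ω) hs0.ne']
    rw [← div_eq_mul_inv]
  -- pointwise identity for the value function
  have key2 : ∀ ω, (∑ i, |f i ω * g0 i ω| ^ r) ^ (1/r) = F ω ^ (p/r) * d ω := by
    intro ω
    have habs : ∀ i : Fin n, |f i ω * g0 i ω| = |f i ω| ^ (1 + p/s) * d ω := by
      intro i
      have h2 : |f i ω| * |f i ω| ^ (p/s) = |f i ω| ^ (1 + p/s) := by
        rw [Real.rpow_add' (abs_nonneg _) (by positivity), Real.rpow_one]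
      rw [abs_mul, abs_of_nonneg (mul_nonneg (Real.rpow_nonneg (abs_nonneg _) _) (hd0 ω)),
        ← mul_assoc, h2]
    have hterm : ∀ i : Fin n, |f i ω * g0 i ω| ^ r = |f i ω| ^ p * d ω ^ r := by
      intro i
      rw [habs i, Real.mul_rpow (Real.rpow_nonneg (abs_nonneg _) _) (hd0 ω),
        ← Real.rpow_mul (abs_nonneg _),
        show (1 + p/s) * r = p by rw [← hprs]; exact div_mul_cancel₀ _ hr0.ne']
    rw [Finset.sum_congr rfl fun i _ => hterm i, ← Finset.sum_mul]
    have hsum_eq : ∑ i, |f i ω| ^ p = F ω ^ p := by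
      rw [hF_def, one_div,
        Real.rpow_inv_rpow (Finset.sum_nonneg fun i _ => Real.rpow_nonneg (abs_nonneg _) _)
          hp0.ne']
    rw [hsum_eq, Real.mul_rpow (Real.rpow_nonneg (hF0 ω) _) (Real.rpow_nonneg (hd0 ω) _),
      ← Real.rpow_mul (hF0 ω), one_div, Real.rpow_rpow_inv (hd0 ω) hr0.ne',
      ← div_eq_mul_inv]
  -- generic form of F ^ a * d
  have keyd : ∀ (a : ℝ) (ω : Ω), F ω ^ a * d ω =
      if F ω = 0 then 0 else F ω ^ (a + (t - 1 - p/s)) / C ^ (t-1) := by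
    intro a ω
    by_cases h : F ω = 0
    · simp [hd_def, h]
    · have hFpos : 0 < F ω := lt_of_le_of_ne (hF0 ω) (Ne.symm h)
      simp only [hd_def, if_neg h]
      rw [← mul_div_assoc, ← Real.rpow_add hFpos]
  have hps_exp : p/s + (t - 1 - p/s) = t - 1 := by ring
  have hpr_exp : p/r + (t - 1 - p/s) = t := by
    have h1 : p/r - p/s = 1 := by rw [hprs]; ring
    linarith
  -- norm identities in ℝ≥0∞
  have hcC : c = ENNReal.ofReal C := (ENNReal.ofReal_toReal hc_top).symm
  have hofC : ENNReal.ofReal (C ^ (t-1)) = c ^ (t-1) := by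
    rw [hcC, ENNReal.ofReal_rpow_of_nonneg ENNReal.toReal_nonneg (by linarith : (0:ℝ) ≤ t - 1)]
  have hct1_ne_zero : c ^ (t-1) ≠ 0 := by
    simp [ENNReal.rpow_eq_zero_iff, hc0, hc_top]
  have hct1_ne_top : c ^ (t-1) ≠ ∞ := by
    simp [ENNReal.rpow_eq_top_iff, hc0, hc_top]
  have hct_ne_zero : c ^ t ≠ 0 := by
    simp [ENNReal.rpow_eq_zero_iff, hc0, hc_top]
  have hct_ne_top : c ^ t ≠ ∞ := by
    simp [ENNReal.rpow_eq_top_iff, hc0, hc_top]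
  have hIt : ∫⁻ ω, ENNReal.ofReal (F ω) ^ t ∂μ = c ^ t := by
    have h1 : c = (∫⁻ ω, ENNReal.ofReal (F ω) ^ t ∂μ) ^ (1/t) := by
      rw [hc_def, eLpNorm_eq_lintegral_rpow_enorm_toReal hu0 hu_top]
      congr 1
      refine lintegral_congr fun ω => ?_
      rw [Real.enorm_eq_ofReal (hF0 ω)]
    rw [h1, ← ENNReal.rpow_mul, one_div, inv_mul_cancel₀ ht0.ne', ENNReal.rpow_one]
  -- the value of the constructed g
  have hval : ∫⁻ ω, ENNReal.ofReal ((∑ i, |f i ω * g0 i ω| ^ r) ^ (1/r)) ∂μ = c := by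
    have hpt : ∀ ω, ENNReal.ofReal ((∑ i, |f i ω * g0 i ω| ^ r) ^ (1/r))
        = (c ^ (t-1))⁻¹ * ENNReal.ofReal (F ω) ^ t := by
      intro ω
      rw [key2 ω, keyd (p/r) ω, hpr_exp]
      by_cases h : F ω = 0
      · rw [if_pos h, h]
        simp [ENNReal.zero_rpow_of_pos ht0]
      · rw [if_neg h]
        rw [ENNReal.ofReal_div_of_pos (by positivity : (0:ℝ) < C ^ (t-1)), hofC,
          ← ENNReal.ofReal_rpow_of_nonneg (hF0 ω) ht0.le, div_eq_mul_inv, mul_comm]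
    rw [lintegral_congr hpt, lintegral_const_mul' _ _ (by simp [hct1_ne_zero]), hIt]
    have hct : c ^ t = c ^ (t-1) * c := by
      rw [show c ^ t = c ^ ((t-1) + 1) by congr 1; ring, ENNReal.rpow_add _ _ hc0 hc_top,
        ENNReal.rpow_one]
    rw [hct, ← mul_assoc, ENNReal.inv_mul_cancel hct1_ne_zero hct1_ne_top, one_mul]
  -- the constraint for the constructed g
  have hgc : ∀ ω, (∑ i, |g0 i ω| ^ s) ^ (1/s)
      = if F ω = 0 then 0 else F ω ^ (t-1) / C ^ (t-1) := by
    intro ω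
    rw [key1 ω, keyd (p/s) ω, hps_exp]
  have hconstr : eLpNorm (fun ω => (∑ i, |g0 i ω| ^ s) ^ (1/s)) u' μ ≤ 1 := by
    by_cases hu't : u' = ∞
    · have hu1 : u = 1 := by
        rw [hu't] at huu'
        simp only [ENNReal.div_top, add_zero, one_div] at huu'
        simpa using congrArg (·⁻¹) huu'
      have ht_eq : t = 1 := by rw [ht_def, hu1]; simp
      rw [hu't, eLpNorm_exponent_top]
      refine le_trans (eLpNormEssSup_le_of_ae_bound (C := 1) (ae_of_all _ fun ω => ?_)) (by simp)
      rw [hgc ω]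
      by_cases h : F ω = 0
      · rw [if_pos h]; simp
      · rw [if_neg h, ht_eq]
        norm_num
    · have hu'0 : u' ≠ 0 := by
        intro h0
        rw [h0] at huu'
        simp at huu'
      set t' := u'.toReal with ht'_def
      have ht'0 : 0 < t' := ENNReal.toReal_pos hu'0 hu't
      have htt' : 1/t + 1/t' = 1 := by
        have h2 := congrArg ENNReal.toReal huu'
        rw [ENNReal.toReal_add (by simp [hu0]) (by simp [hu'0])] at h2
        simpa [ENNReal.toReal_div] using h2
      have htne1 : t ≠ 1 := by
        intro h1
        rw [h1] at htt'
        have h2 : 1/t' = 0 := by norm_num at htt'; linarith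
        rw [one_div, inv_eq_zero] at h2
        exact ht'0.ne' h2
      have hexp : (t - 1) * t' = t := by
        have ht1' : 1 < t := lt_of_le_of_ne ht1 (Ne.symm htne1)
        field_simp at htt'
        nlinarith [htt']
      rw [eLpNorm_eq_lintegral_rpow_enorm_toReal hu'0 hu't]
      have hpt : ∀ ω, ‖(∑ i, |g0 i ω| ^ s) ^ (1/s)‖ₑ ^ t'
          = (c ^ t)⁻¹ * ENNReal.ofReal (F ω) ^ t := by
        intro ω
        rw [Real.enorm_eq_ofReal
          (Real.rpow_nonneg (Finset.sum_nonneg fun i _ => Real.rpow_nonneg (abs_nonneg _) _) _),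
          hgc ω]
        by_cases h : F ω = 0
        · rw [if_pos h, h]
          simp [ENNReal.zero_rpow_of_pos ht'0, ENNReal.zero_rpow_of_pos ht0]
        · rw [if_neg h]
          rw [ENNReal.ofReal_div_of_pos (by positivity : (0:ℝ) < C ^ (t-1)), hofC,
            ← ENNReal.ofReal_rpow_of_nonneg (hF0 ω) (by linarith : (0:ℝ) ≤ t - 1),
            ENNReal.div_rpow_of_nonneg _ _ ht'0.le, ← ENNReal.rpow_mul, ← ENNReal.rpow_mul,
            hexp, div_eq_mul_inv, mul_comm]
      rw [lintegral_congr hpt, lintegral_const_mul' _ _ (by simp [hct_ne_zero]), hIt,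
        ENNReal.inv_mul_cancel hct_ne_zero hct_ne_top, ENNReal.one_rpow]
  -- membership of the constructed g in L^{u'}
  have hmem : ∀ i, MemLp (g0 i) u' μ := by
    intro i
    refine ⟨(hg0aem i).aestronglyMeasurable, ?_⟩
    refine lt_of_le_of_lt (le_trans (eLpNorm_mono fun ω => ?_) hconstr) ENNReal.one_lt_top
    have hnn : (0:ℝ) ≤ (∑ j, |g0 j ω| ^ s) ^ (1/s) :=
      Real.rpow_nonneg (Finset.sum_nonneg fun j _ => Real.rpow_nonneg (abs_nonneg _) _) _
    rw [Real.norm_eq_abs, Real.norm_eq_abs, abs_of_nonneg hnn]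
    have h1 : |g0 i ω| = (|g0 i ω| ^ s) ^ (1/s) := by
      rw [one_div, Real.rpow_rpow_inv (abs_nonneg _) hs0.ne']
    rw [h1]
    refine Real.rpow_le_rpow (Real.rpow_nonneg (abs_nonneg _) _) ?_ (by positivity)
    exact Finset.single_le_sum (f := fun j => |g0 j ω| ^ s)
      (fun j _ => Real.rpow_nonneg (abs_nonneg _) _) (Finset.mem_univ i)
  set gL : Fin n → Lp ℝ u' μ := fun i => (hmem i).toLp (g0 i) with hgL_def
  have hae : ∀ᵐ ω ∂μ, ∀ i, gL i ω = g0 i ω := by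
    rw [ae_all_iff]
    exact fun i => (hmem i).coeFn_toLp
  refine le_iSup₂_of_le gL ?_ ?_
  · have heq : (fun ω => (∑ i, |gL i ω| ^ s) ^ (1/s))
        =ᵐ[μ] (fun ω => (∑ i, |g0 i ω| ^ s) ^ (1/s)) :=
      hae.mono fun ω h => by simp only [h]
    rw [eLpNorm_congr_ae heq]
    exact hconstr
  · have heq : (fun ω => ENNReal.ofReal ((∑ i, |f i ω * gL i ω| ^ r) ^ (1/r)))
        =ᵐ[μ] (fun ω => ENNReal.ofReal ((∑ i, |f i ω * g0 i ω| ^ r) ^ (1/r))) :=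
      hae.mono fun ω h => by simp only [h]
    rw [lintegral_congr_ae heq, hval]
end

section
/- Let $(\Omega,\Sigma,\mu)$ and $(\Omega',\Sigma',\nu)$ be $\sigma$-finite measure spaces, $1 \le u < \infty$, $1 < v < \infty$ with conjugate exponent $v'$, and let $1 \le r \le p, s < \infty$ satisfy $1/r = 1/p + 1/s$ and $1 \le q \le p$. For a bounded linear operator $T : L^u(\mu) \to L^v(\nu)$ and $K \ge 0$, the following are equivalent: (i) $T$ is $(p,q)$-regular with constant $K$; (ii) for all finite families $f_1,\dots,f_n \in L^u(\mu)$ and $g_1,\dots,g_n \in L^{v'}(\nu)$: $\int_{\Omega'} \big(\sum_{i=1}^n |(Tf_i)\, g_i|^r\big)^{1/r} d\nu \le K \, \big\|(\sum_{i=1}^n |f_i|^q)^{1/q}\big\|_{L^u(\mu)} \, \big\|(\sum_{i=1}^n |g_i|^s)^{1/s}\big\|_{L^{v'}(\nu)}$. -/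
open MeasureTheory ENNReal

/-- Generalized discrete Hölder inequality with three exponents. -/
lemma stmt8_fin_holder {r p s : ℝ} (hr0 : 0 < r) (hrp : r < p) (hs0 : 0 < s)
    (hc : 1 / r = 1 / p + 1 / s) {n : ℕ} (a b : Fin n → ℝ)
    (ha : ∀ i, 0 ≤ a i) (hb : ∀ i, 0 ≤ b i) :
    (∑ i, (a i * b i) ^ r) ^ (1 / r) ≤
      (∑ i, a i ^ p) ^ (1 / p) * (∑ i, b i ^ s) ^ (1 / s) := by
  have hp0 : 0 < p := hr0.trans hrp
  have hconj : Real.HolderConjugate (p / r) (s / r) := by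
    refine Real.holderConjugate_iff.mpr ⟨?_, ?_⟩
    · rw [lt_div_iff₀ hr0]; linarith
    · have h2 : (p / r)⁻¹ + (s / r)⁻¹ = r * (1 / p + 1 / s) := by
        rw [inv_div, inv_div]
        field_simp
      rw [h2, ← hc]
      field_simp
  have key : ∑ i, (a i * b i) ^ r ≤
      (∑ i, a i ^ p) ^ (1 / (p / r)) * (∑ i, b i ^ s) ^ (1 / (s / r)) := by
    have h := Real.inner_le_Lp_mul_Lq_of_nonneg (Finset.univ (α := Fin n)) hconj
      (f := fun i => a i ^ r) (g := fun i => b i ^ r)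
      (fun i _ => Real.rpow_nonneg (ha i) r) (fun i _ => Real.rpow_nonneg (hb i) r)
    calc ∑ i, (a i * b i) ^ r = ∑ i, (a i ^ r) * (b i ^ r) := by
          refine Finset.sum_congr rfl fun i _ => ?_
          rw [Real.mul_rpow (ha i) (hb i)]
      _ ≤ (∑ i, (a i ^ r) ^ (p / r)) ^ (1 / (p / r)) *
            (∑ i, (b i ^ r) ^ (s / r)) ^ (1 / (s / r)) := h
      _ = (∑ i, a i ^ p) ^ (1 / (p / r)) * (∑ i, b i ^ s) ^ (1 / (s / r)) := by
          congr 2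
          · refine Finset.sum_congr rfl fun i _ => ?_
            rw [← Real.rpow_mul (ha i), mul_div_cancel₀ _ hr0.ne']
          · refine Finset.sum_congr rfl fun i _ => ?_
            rw [← Real.rpow_mul (hb i), mul_div_cancel₀ _ hr0.ne']
  have hsum_nonneg : 0 ≤ ∑ i, (a i * b i) ^ r :=
    Finset.sum_nonneg fun i _ => Real.rpow_nonneg (mul_nonneg (ha i) (hb i)) r
  have hAnn : (0:ℝ) ≤ (∑ i, a i ^ p) ^ (1 / (p / r)) :=
    Real.rpow_nonneg (Finset.sum_nonneg fun i _ => Real.rpow_nonneg (ha i) p) _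
  have hBnn : (0:ℝ) ≤ (∑ i, b i ^ s) ^ (1 / (s / r)) :=
    Real.rpow_nonneg (Finset.sum_nonneg fun i _ => Real.rpow_nonneg (hb i) s) _
  calc (∑ i, (a i * b i) ^ r) ^ (1 / r)
      ≤ ((∑ i, a i ^ p) ^ (1 / (p / r)) * (∑ i, b i ^ s) ^ (1 / (s / r))) ^ (1 / r) :=
        Real.rpow_le_rpow hsum_nonneg key (by positivity)
    _ = (∑ i, a i ^ p) ^ (1 / p) * (∑ i, b i ^ s) ^ (1 / s) := by
        rw [Real.mul_rpow hAnn hBnn,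
          ← Real.rpow_mul (Finset.sum_nonneg fun i _ => Real.rpow_nonneg (ha i) p),
          ← Real.rpow_mul (Finset.sum_nonneg fun i _ => Real.rpow_nonneg (hb i) s)]
        rw [show 1 / (p / r) * (1 / r) = 1 / p by field_simp,
          show 1 / (s / r) * (1 / r) = 1 / s by field_simp]

/-- `eLpNorm` of a nonnegative function as a lintegral of `ENNReal.ofReal`. -/
lemma stmt8_eLpNorm_eq {α : Type*} [MeasurableSpace α] {ν : Measure α}
    {e : ℝ≥0∞} (he0 : e ≠ 0) (het : e ≠ ∞) {h : α → ℝ} (hh : ∀ x, 0 ≤ h x) :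
    eLpNorm h e ν = (∫⁻ x, ENNReal.ofReal (h x) ^ e.toReal ∂ν) ^ (1 / e.toReal) := by
  rw [eLpNorm_eq_lintegral_rpow_enorm_toReal he0 het]
  congr 1
  refine lintegral_congr fun x => ?_
  rw [Real.enorm_eq_ofReal (hh x)]

set_option maxHeartbeats 1000000 in
/-- A bounded operator `T : L^u(μ) → L^v(ν)` is `(p,q)`-regular with constant
`K` iff the associated bilinear inequality holds:
`∫ (∑ᵢ |(T fᵢ) gᵢ|^r)^(1/r) dν ≤ K ‖(∑ᵢ |fᵢ|^q)^(1/q)‖_u ‖(∑ᵢ |gᵢ|^s)^(1/s)‖_{v'}`. -/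
theorem stmt8 {Ω Ω' : Type*} [MeasurableSpace Ω] [MeasurableSpace Ω']
    (μ : Measure Ω) (ν : Measure Ω') [SigmaFinite μ] [SigmaFinite ν]
    (u v v' : ℝ≥0∞) [Fact (1 ≤ u)] [Fact (1 ≤ v)]
    (hu_top : u ≠ ∞) (hv1 : 1 < v) (hv_top : v ≠ ∞) (hvv' : 1 / v + 1 / v' = 1)
    (r p s q : ℝ) (hr : 1 ≤ r) (hrp : r ≤ p) (hrs : r ≤ s)
    (hc : 1 / r = 1 / p + 1 / s) (hq : 1 ≤ q) (hqp : q ≤ p)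
    (T : Lp ℝ u μ →L[ℝ] Lp ℝ v ν) (K : ℝ) (hK : 0 ≤ K) :
    IsPQRegular (⇑T) p q K ↔
      ∀ (n : ℕ) (f : Fin n → Lp ℝ u μ) (g : Fin n → Lp ℝ v' ν),
        ∫⁻ ω', ENNReal.ofReal ((∑ i, |T (f i) ω' * g i ω'| ^ r) ^ (1 / r)) ∂ν ≤
          ENNReal.ofReal K * eLpNorm (fun ω => (∑ i, |f i ω| ^ q) ^ (1 / q)) u μ *
            eLpNorm (fun ω' => (∑ i, |g i ω'| ^ s) ^ (1 / s)) v' ν := by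
  -- basic positivity facts on the real exponents
  have hr0 : (0:ℝ) < r := zero_lt_one.trans_le hr
  have hs0 : (0:ℝ) < s := hr0.trans_le hrs
  have hp0 : (0:ℝ) < p := hr0.trans_le hrp
  have hrltp : r < p := by
    have h1 : 1 / p < 1 / r := by
      rw [hc]
      have := one_div_pos.2 hs0
      linarith
    have h2 := mul_lt_mul_of_pos_left h1 (mul_pos hr0 hp0)
    calc r = r * p * (1 / p) := by field_simp
      _ < r * p * (1 / r) := h2
      _ = p := by field_simp
  have hkey : p * s = p * r + r * s := by
    have e : (1:ℝ)/r * (r * p * s) = (1/p + 1/s) * (r * p * s) := by rw [hc]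
    have e1 : (1:ℝ)/r * (r * p * s) = p * s := by
      field_simp
    have e2 : ((1:ℝ)/p + 1/s) * (r * p * s) = r * s + r * p := by
      field_simp
    rw [e1, e2] at e
    linarith
  -- facts on v and v'
  have hv0 : v ≠ 0 := (zero_lt_one.trans hv1).ne'
  simp only [one_div] at hvv'
  have hv'top : v' ≠ ∞ := by
    intro h
    rw [h] at hvv'
    simp only [ENNReal.inv_top, add_zero, ENNReal.inv_eq_one] at hvv'
    exact hv1.ne' hvv'
  have hv'0 : v' ≠ 0 := by
    intro h
    rw [h] at hvv'
    simp at hvv'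
  have hsumr : (v.toReal)⁻¹ + (v'.toReal)⁻¹ = 1 := by
    have h1 : (v⁻¹ + v'⁻¹).toReal = 1 := by rw [hvv', ENNReal.toReal_one]
    rwa [ENNReal.toReal_add (ENNReal.inv_ne_top.2 hv0) (ENNReal.inv_ne_top.2 hv'0),
      ENNReal.toReal_inv, ENNReal.toReal_inv] at h1
  have hvr1 : 1 < v.toReal := by
    rw [← ENNReal.toReal_one]
    exact (ENNReal.toReal_lt_toReal ENNReal.one_ne_top hv_top).2 hv1
  have hvconj : Real.HolderConjugate v.toReal v'.toReal :=
    Real.holderConjugate_iff.mpr ⟨hvr1, hsumr⟩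
  have hvr0 : (0:ℝ) < v.toReal := hvconj.pos
  have hvr'0 : (0:ℝ) < v'.toReal := hvconj.symm.pos
  constructor
  · -- (i) → (ii)
    intro hreg n f g
    have hA_nonneg : ∀ ω', 0 ≤ (∑ i, |T (f i) ω'| ^ p) ^ (1 / p) := fun ω' =>
      Real.rpow_nonneg (Finset.sum_nonneg fun i _ => Real.rpow_nonneg (abs_nonneg _) _) _
    have hB_nonneg : ∀ ω', 0 ≤ (∑ i, |g i ω'| ^ s) ^ (1 / s) := fun ω' =>
      Real.rpow_nonneg (Finset.sum_nonneg fun i _ => Real.rpow_nonneg (abs_nonneg _) _) _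
    have hA_meas : AEMeasurable (fun ω' => (∑ i, |T (f i) ω'| ^ p) ^ (1 / p)) ν := by
      refine AEMeasurable.pow ?_ aemeasurable_const
      exact Finset.aemeasurable_fun_sum _ fun i _ =>
        (measurable_abs.comp_aemeasurable
          (Lp.aestronglyMeasurable (T (f i))).aemeasurable).pow aemeasurable_const
    have hB_meas : AEMeasurable (fun ω' => (∑ i, |g i ω'| ^ s) ^ (1 / s)) ν := by
      refine AEMeasurable.pow ?_ aemeasurable_const
      exact Finset.aemeasurable_fun_sum _ fun i _ =>
        (measurable_abs.comp_aemeasurable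
          (Lp.aestronglyMeasurable (g i)).aemeasurable).pow aemeasurable_const
    have hpt : ∀ ω', ENNReal.ofReal ((∑ i, |T (f i) ω' * g i ω'| ^ r) ^ (1 / r)) ≤
        ENNReal.ofReal ((∑ i, |T (f i) ω'| ^ p) ^ (1 / p)) *
          ENNReal.ofReal ((∑ i, |g i ω'| ^ s) ^ (1 / s)) := by
      intro ω'
      rw [← ENNReal.ofReal_mul (hA_nonneg ω')]
      refine ENNReal.ofReal_le_ofReal ?_
      have h := stmt8_fin_holder hr0 hrltp hs0 hc (fun i => |T (f i) ω'|)
        (fun i => |g i ω'|) (fun i => abs_nonneg _) (fun i => abs_nonneg _)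
      calc (∑ i, |T (f i) ω' * g i ω'| ^ r) ^ (1 / r)
          = (∑ i, (|T (f i) ω'| * |g i ω'|) ^ r) ^ (1 / r) := by
            congr 1
            exact Finset.sum_congr rfl fun i _ => by rw [abs_mul]
        _ ≤ _ := h
    calc ∫⁻ ω', ENNReal.ofReal ((∑ i, |T (f i) ω' * g i ω'| ^ r) ^ (1 / r)) ∂ν
        ≤ ∫⁻ ω', ENNReal.ofReal ((∑ i, |T (f i) ω'| ^ p) ^ (1 / p)) *
            ENNReal.ofReal ((∑ i, |g i ω'| ^ s) ^ (1 / s)) ∂ν := lintegral_mono hpt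
      _ ≤ (∫⁻ ω', ENNReal.ofReal ((∑ i, |T (f i) ω'| ^ p) ^ (1 / p)) ^ v.toReal ∂ν) ^
              (1 / v.toReal) *
            (∫⁻ ω', ENNReal.ofReal ((∑ i, |g i ω'| ^ s) ^ (1 / s)) ^ v'.toReal ∂ν) ^
              (1 / v'.toReal) :=
          ENNReal.lintegral_mul_le_Lp_mul_Lq ν hvconj hA_meas.ennreal_ofReal
            hB_meas.ennreal_ofReal
      _ = eLpNorm (fun ω' => (∑ i, |T (f i) ω'| ^ p) ^ (1 / p)) v ν *
            eLpNorm (fun ω' => (∑ i, |g i ω'| ^ s) ^ (1 / s)) v' ν := by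
          rw [stmt8_eLpNorm_eq hv0 hv_top hA_nonneg, stmt8_eLpNorm_eq hv'0 hv'top hB_nonneg]
      _ ≤ (ENNReal.ofReal K * eLpNorm (fun ω => (∑ i, |f i ω| ^ q) ^ (1 / q)) u μ) *
            eLpNorm (fun ω' => (∑ i, |g i ω'| ^ s) ^ (1 / s)) v' ν :=
          mul_le_mul_left (hreg n f) _
  · -- (ii) → (i)
    intro hbil n f
    set F : Ω' → ℝ := fun ω' => (∑ i, |T (f i) ω'| ^ p) ^ (1 / p) with hF_def
    have hF_nonneg : ∀ ω', 0 ≤ F ω' := fun ω' =>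
      Real.rpow_nonneg (Finset.sum_nonneg fun i _ => Real.rpow_nonneg (abs_nonneg _) _) _
    have hF_meas : AEMeasurable F ν := by
      refine AEMeasurable.pow ?_ aemeasurable_const
      exact Finset.aemeasurable_fun_sum _ fun i _ =>
        (measurable_abs.comp_aemeasurable
          (Lp.aestronglyMeasurable (T (f i))).aemeasurable).pow aemeasurable_const
    have hFp : ∀ ω', F ω' ^ p = ∑ i, |T (f i) ω'| ^ p := by
      intro ω'
      rw [hF_def]
      rw [← Real.rpow_mul (Finset.sum_nonneg fun i _ => Real.rpow_nonneg (abs_nonneg _) _),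
        one_div_mul_cancel hp0.ne', Real.rpow_one]
    have hFzero : ∀ ω', F ω' = 0 → ∀ i, |T (f i) ω'| = 0 := by
      intro ω' h0 i
      have hS : ∑ j, |T (f j) ω'| ^ p = 0 := by
        rw [← hFp ω', h0, Real.zero_rpow hp0.ne']
      have h2 : |T (f i) ω'| ^ p = 0 := (Finset.sum_eq_zero_iff_of_nonneg
        (fun j _ => Real.rpow_nonneg (abs_nonneg (T (f j) ω')) p)).1 hS i (Finset.mem_univ i)
      by_contra hne
      have habs : 0 < |T (f i) ω'| := (abs_nonneg _).lt_of_ne (Ne.symm hne)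
      exact (Real.rpow_pos_of_pos habs p).ne' h2
    have hTle : ∀ ω' i, |T (f i) ω'| ≤ F ω' := by
      intro ω' i
      have h1 : |T (f i) ω'| ^ p ≤ ∑ j, |T (f j) ω'| ^ p :=
        Finset.single_le_sum (f := fun j => |T (f j) ω'| ^ p)
          (fun j _ => Real.rpow_nonneg (abs_nonneg _) p) (Finset.mem_univ i)
      have h2 : (|T (f i) ω'| ^ p) ^ (1/p) ≤ F ω' :=
        Real.rpow_le_rpow (Real.rpow_nonneg (abs_nonneg _) p) h1 (by positivity)
      rwa [← Real.rpow_mul (abs_nonneg _), mul_one_div_cancel hp0.ne', Real.rpow_one] at h2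
    -- F has finite L^v norm
    set G : Ω' → ℝ := fun ω' => ∑ i, |T (f i) ω'| with hG_def
    have hG_nonneg : ∀ ω', 0 ≤ G ω' := fun ω' =>
      Finset.sum_nonneg fun i _ => abs_nonneg _
    have hG_mem : MemLp G v ν := by
      refine memLp_finset_sum Finset.univ (f := fun i (a : Ω') => |T (f i) a|) fun i _ => ?_
      exact (Lp.memLp (T (f i))).abs
    have hFleG : ∀ ω', F ω' ≤ (n : ℝ) ^ (1/p) * G ω' := by
      intro ω'
      have h1 : ∀ i : Fin n, |T (f i) ω'| ^ p ≤ G ω' ^ p := fun i =>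
        Real.rpow_le_rpow (abs_nonneg _)
          (Finset.single_le_sum (f := fun j => |T (f j) ω'|)
            (fun j _ => abs_nonneg _) (Finset.mem_univ i)) hp0.le
      have h2 : ∑ i, |T (f i) ω'| ^ p ≤ (n : ℝ) * G ω' ^ p := by
        calc ∑ i, |T (f i) ω'| ^ p ≤ ∑ _i : Fin n, G ω' ^ p :=
              Finset.sum_le_sum fun i _ => h1 i
          _ = (n : ℝ) * G ω' ^ p := by
              rw [Finset.sum_const, Finset.card_univ, Fintype.card_fin, nsmul_eq_mul]
      calc F ω' ≤ ((n : ℝ) * G ω' ^ p) ^ (1/p) :=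
            Real.rpow_le_rpow (Finset.sum_nonneg fun i _ =>
              Real.rpow_nonneg (abs_nonneg _) _) h2 (by positivity)
        _ = (n : ℝ) ^ (1/p) * G ω' := by
            rw [Real.mul_rpow (Nat.cast_nonneg n) (Real.rpow_nonneg (hG_nonneg ω') p),
              ← Real.rpow_mul (hG_nonneg ω'), mul_one_div_cancel hp0.ne', Real.rpow_one]
    have hF_lt_top : eLpNorm F v ν < ∞ := by
      have hb : ∀ ω', ‖F ω'‖ ≤ ‖(n : ℝ) ^ (1/p) * G ω'‖ := by
        intro ω'
        rw [Real.norm_eq_abs, Real.norm_eq_abs, abs_of_nonneg (hF_nonneg ω')]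
        exact (hFleG ω').trans (le_abs_self _)
      exact (eLpNorm_mono hb).trans_lt (hG_mem.const_mul ((n : ℝ) ^ (1/p))).2
    set I : ℝ≥0∞ := ∫⁻ ω', ENNReal.ofReal (F ω') ^ v.toReal ∂ν with hI_def
    have hIF : eLpNorm F v ν = I ^ (1 / v.toReal) :=
      stmt8_eLpNorm_eq hv0 hv_top hF_nonneg
    have hI_ne_top : I ≠ ∞ := by
      intro h
      rw [hIF, h, ENNReal.top_rpow_of_pos (by positivity)] at hF_lt_top
      exact (lt_irrefl _ hF_lt_top)
    -- exponent identities
    have hA1 : p / r = 1 + p / s := by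
      field_simp
      nlinarith [hkey]
    have he2 : p / s + (v.toReal - p / r) = v.toReal - 1 := by
      have : p / s - p / r = -1 := by
        rw [hA1]; ring
      linarith
    -- the dual functions
    set gfun : Fin n → Ω' → ℝ :=
      fun i ω' => |T (f i) ω'| ^ (p/s) * F ω' ^ (v.toReal - p/r) with hgfun_def
    have hgfun_nonneg : ∀ i ω', 0 ≤ gfun i ω' := fun i ω' =>
      mul_nonneg (Real.rpow_nonneg (abs_nonneg _) _) (Real.rpow_nonneg (hF_nonneg ω') _)
    have hgfun_meas : ∀ i, AEMeasurable (gfun i) ν := fun i =>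
      ((measurable_abs.comp_aemeasurable
        (Lp.aestronglyMeasurable (T (f i))).aemeasurable).pow aemeasurable_const).mul
        (hF_meas.pow aemeasurable_const)
    have hgfun_le : ∀ i ω', gfun i ω' ≤ F ω' ^ (v.toReal - 1) := by
      intro i ω'
      rcases eq_or_lt_of_le (hF_nonneg ω') with h0 | hpos
      · have hT0 : |T (f i) ω'| = 0 := hFzero ω' h0.symm i
        rw [hgfun_def]
        simp only [hT0]
        rw [Real.zero_rpow (by positivity : p/s ≠ 0), zero_mul, ← h0,
          Real.zero_rpow (by nlinarith : v.toReal - 1 ≠ 0)]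
      · calc gfun i ω' ≤ F ω' ^ (p/s) * F ω' ^ (v.toReal - p/r) := by
              refine mul_le_mul_of_nonneg_right ?_ (Real.rpow_nonneg (hF_nonneg ω') _)
              exact Real.rpow_le_rpow (abs_nonneg _) (hTle ω' i) (by positivity)
          _ = F ω' ^ (v.toReal - 1) := by
              rw [← Real.rpow_add hpos, he2]
    -- the L^{v'} norm of F^(v.toReal - 1)
    have hvmul : (v.toReal - 1) * v'.toReal = v.toReal := by
      have h1 := hsumr
      field_simp at h1
      nlinarith [h1]
    have hFpow_eq : ∀ ω', ENNReal.ofReal (F ω' ^ (v.toReal - 1)) ^ v'.toReal =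
        ENNReal.ofReal (F ω') ^ v.toReal := by
      intro ω'
      rw [← ENNReal.ofReal_rpow_of_nonneg (hF_nonneg ω') (by linarith : (0:ℝ) ≤ v.toReal - 1),
        ← ENNReal.rpow_mul, hvmul]
    have hIeq : eLpNorm (fun ω' => F ω' ^ (v.toReal - 1)) v' ν = I ^ (1 / v'.toReal) := by
      rw [stmt8_eLpNorm_eq hv'0 hv'top (fun ω' => Real.rpow_nonneg (hF_nonneg ω') _)]
      congr 1
      exact lintegral_congr fun ω' => hFpow_eq ω'
    have hFpow_mem : MemLp (fun ω' => F ω' ^ (v.toReal - 1)) v' ν := by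
      constructor
      · exact (hF_meas.pow aemeasurable_const).aestronglyMeasurable
      · rw [hIeq]
        exact ENNReal.rpow_lt_top_of_nonneg (by positivity) hI_ne_top
    have hg_mem : ∀ i, MemLp (gfun i) v' ν := by
      intro i
      refine hFpow_mem.of_le (hgfun_meas i).aestronglyMeasurable ?_
      refine Filter.Eventually.of_forall fun ω' => ?_
      rw [Real.norm_eq_abs, Real.norm_eq_abs, abs_of_nonneg (hgfun_nonneg i ω')]
      exact (hgfun_le i ω').trans (le_abs_self _)
    set gLp : Fin n → Lp ℝ v' ν := fun i => (hg_mem i).toLp (gfun i) with hgLp_def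
    have h_ae : ∀ᵐ ω' ∂ν, ∀ i, gLp i ω' = gfun i ω' :=
      ae_all_iff.2 fun i => (hg_mem i).coeFn_toLp
    have hineq := hbil n f gLp
    -- identify the left-hand side
    have hL : ∫⁻ ω', ENNReal.ofReal ((∑ i, |T (f i) ω' * gLp i ω'| ^ r) ^ (1 / r)) ∂ν = I := by
      rw [hI_def]
      refine lintegral_congr_ae ?_
      filter_upwards [h_ae] with ω' hω'
      have hsum_eq : (∑ i, |T (f i) ω' * gLp i ω'| ^ r) =
          ∑ i, |T (f i) ω' * gfun i ω'| ^ r :=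
        Finset.sum_congr rfl fun i _ => by rw [hω' i]
      rw [hsum_eq]
      rcases eq_or_lt_of_le (hF_nonneg ω') with h0 | hpos
      · have : ∀ i : Fin n, |T (f i) ω' * gfun i ω'| ^ r = 0 := by
          intro i
          have hT0 : |T (f i) ω'| = 0 := hFzero ω' h0.symm i
          rw [abs_mul, hT0, zero_mul, Real.zero_rpow hr0.ne']
        rw [Finset.sum_congr rfl fun i _ => this i, Finset.sum_const, smul_zero,
          Real.zero_rpow (by positivity : 1/r ≠ 0), ENNReal.ofReal_zero, ← h0,
          ENNReal.ofReal_zero, ENNReal.zero_rpow_of_pos hvr0]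
      · have hterm : ∀ i : Fin n, |T (f i) ω' * gfun i ω'| ^ r =
            |T (f i) ω'| ^ p * F ω' ^ (v.toReal * r - p) := by
          intro i
          have h1 : |T (f i) ω' * gfun i ω'| =
              |T (f i) ω'| ^ (1 + p/s) * F ω' ^ (v.toReal - p/r) := by
            rw [abs_mul, abs_of_nonneg (hgfun_nonneg i ω'), hgfun_def]
            rw [Real.rpow_add' (abs_nonneg _) (by positivity : (1:ℝ) + p/s ≠ 0),
              Real.rpow_one]
            ring
          rw [h1, Real.mul_rpow (Real.rpow_nonneg (abs_nonneg _) _)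
            (Real.rpow_nonneg (hF_nonneg ω') _),
            ← Real.rpow_mul (abs_nonneg _), ← Real.rpow_mul (hF_nonneg ω')]
          congr 1
          · congr 1
            rw [← hA1]
            field_simp
          · congr 1
            field_simp
        rw [Finset.sum_congr rfl fun i _ => hterm i, ← Finset.sum_mul, ← hFp ω',
          ← Real.rpow_add hpos]
        have hexp : p + (v.toReal * r - p) = v.toReal * r := by ring
        rw [hexp, ← Real.rpow_mul (hF_nonneg ω'),
          show v.toReal * r * (1/r) = v.toReal by field_simp,
          ENNReal.ofReal_rpow_of_nonneg (hF_nonneg ω') hvr0.le]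
    -- identify the right-hand g norm
    have hR : eLpNorm (fun ω' => (∑ i, |gLp i ω'| ^ s) ^ (1 / s)) v' ν = I ^ (1 / v'.toReal) := by
      rw [← hIeq]
      refine eLpNorm_congr_ae ?_
      filter_upwards [h_ae] with ω' hω'
      have hsum_eq : (∑ i, |gLp i ω'| ^ s) = ∑ i, |gfun i ω'| ^ s :=
        Finset.sum_congr rfl fun i _ => by rw [hω' i]
      rw [hsum_eq]
      rcases eq_or_lt_of_le (hF_nonneg ω') with h0 | hpos
      · have hz : ∀ i : Fin n, |gfun i ω'| ^ s = 0 := by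
          intro i
          have hT0 : |T (f i) ω'| = 0 := hFzero ω' h0.symm i
          rw [hgfun_def]
          simp only [hT0]
          rw [Real.zero_rpow (by positivity : p/s ≠ 0), zero_mul, abs_zero,
            Real.zero_rpow hs0.ne']
        rw [Finset.sum_congr rfl fun i _ => hz i, Finset.sum_const, smul_zero,
          Real.zero_rpow (by positivity : 1/s ≠ 0), ← h0,
          Real.zero_rpow (by nlinarith : v.toReal - 1 ≠ 0)]
      · have hterm : ∀ i : Fin n, |gfun i ω'| ^ s =
            |T (f i) ω'| ^ p * F ω' ^ ((v.toReal - p/r) * s) := by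
          intro i
          rw [abs_of_nonneg (hgfun_nonneg i ω'), hgfun_def]
          rw [Real.mul_rpow (Real.rpow_nonneg (abs_nonneg _) _)
            (Real.rpow_nonneg (hF_nonneg ω') _),
            ← Real.rpow_mul (abs_nonneg _), ← Real.rpow_mul (hF_nonneg ω'),
            div_mul_cancel₀ _ hs0.ne']
        rw [Finset.sum_congr rfl fun i _ => hterm i, ← Finset.sum_mul, ← hFp ω',
          ← Real.rpow_add hpos]
        have hexp : p + (v.toReal - p/r) * s = (v.toReal - 1) * s := by
          have h1 : p / s - p / r = -1 := by rw [hA1]; ring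
          have h2 : p - (p/r) * s = -s := by
            field_simp
            linarith [hkey]
          nlinarith [h2]
        rw [hexp, ← Real.rpow_mul (hF_nonneg ω'),
          show (v.toReal - 1) * s * (1/s) = v.toReal - 1 by field_simp]
    rw [hL, hR] at hineq
    -- conclude
    rw [hIF]
    rcases eq_or_ne I 0 with h0 | h0
    · rw [h0, ENNReal.zero_rpow_of_pos (by positivity)]
      exact zero_le
    · have hpow_ne0 : I ^ (1 / v'.toReal) ≠ 0 := by
        simp [ENNReal.rpow_eq_zero_iff, h0, hI_ne_top]
      have hpow_net : I ^ (1 / v'.toReal) ≠ ∞ :=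
        ENNReal.rpow_ne_top_of_nonneg (by positivity) hI_ne_top
      rw [← ENNReal.mul_le_mul_iff_left hpow_ne0 hpow_net,
        ← ENNReal.rpow_add _ _ h0 hI_ne_top,
        show 1 / v.toReal + 1 / v'.toReal = 1 by
          rw [one_div, one_div]; exact hsumr,
        ENNReal.rpow_one]
      exact hineq
end

section
/- Let $(\Omega,\Sigma,\mu)$ and $(\Omega',\Sigma',\nu)$ be measure spaces, $1 \le u, v \le \infty$, and $1 \le q \le p < \infty$ with $1 < p$ and conjugate exponent $p'$ ($1/p + 1/p' = 1$). Then for all finite families $f_1,\dots,f_n \in L^u(\mu)$, $g_1,\dots,g_n \in L^v(\nu)$ and all continuous linear functionals $x^* \in (L^u(\mu))^*$, $y^* \in (L^v(\nu))^*$ with $\|x^*\| \le 1$ and $\|y^*\| \le 1$, one has $\big|\sum_{i=1}^n x^*(f_i)\, y^*(g_i)\big| \le \big\|(\sum_{i=1}^n |f_i|^q)^{1/q}\big\|_{L^u(\mu)} \cdot \big\|(\sum_{i=1}^n |g_i|^{p'})^{1/p'}\big\|_{L^v(\nu)}$. -/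
open MeasureTheory ENNReal Finset

/-- ℓ^p-norm monotonicity in the exponent for nonnegative finite families. -/
lemma aux_rpow_mono {ι : Type*} (s : Finset ι) (a : ι → ℝ) (ha : ∀ i, 0 ≤ a i)
    {q p : ℝ} (hq : 0 < q) (hqp : q ≤ p) :
    (∑ i ∈ s, a i ^ p) ^ (1 / p) ≤ (∑ i ∈ s, a i ^ q) ^ (1 / q) := by
  have hp : 0 < p := hq.trans_le hqp
  set S := ∑ i ∈ s, a i ^ q with hSdef
  have hS0 : 0 ≤ S := Finset.sum_nonneg fun i _ => Real.rpow_nonneg (ha i) q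
  rcases eq_or_lt_of_le hS0 with hS | hS
  · have hzero : ∀ i ∈ s, a i = 0 := by
      intro i hi
      have h1 := (Finset.sum_eq_zero_iff_of_nonneg
        (fun j _ => Real.rpow_nonneg (ha j) q)).1 hS.symm i hi
      exact (Real.rpow_eq_zero (ha i) hq.ne').1 h1
    have h2 : ∑ i ∈ s, a i ^ p = 0 :=
      Finset.sum_eq_zero fun i hi => by rw [hzero i hi]; exact Real.zero_rpow hp.ne'
    rw [h2, ← hS, Real.zero_rpow (by positivity), Real.zero_rpow (by positivity)]
  · have hai : ∀ i ∈ s, a i ≤ S ^ (1 / q) := by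
      intro i hi
      have h1 : a i ^ q ≤ S :=
        Finset.single_le_sum (fun j _ => Real.rpow_nonneg (ha j) q) hi
      calc a i = (a i ^ q) ^ (1 / q) := by
            rw [← Real.rpow_mul (ha i), mul_one_div, div_self hq.ne', Real.rpow_one]
        _ ≤ S ^ (1 / q) :=
            Real.rpow_le_rpow (Real.rpow_nonneg (ha i) q) h1 (by positivity)
    have key : ∑ i ∈ s, a i ^ p ≤ S ^ (p / q) := by
      calc ∑ i ∈ s, a i ^ p ≤ ∑ i ∈ s, a i ^ q * S ^ ((p - q) / q) := by
            refine Finset.sum_le_sum fun i hi => ?_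
            have e1 : a i ^ p = a i ^ q * a i ^ (p - q) := by
              rw [← Real.rpow_add' (ha i) (by simpa using hp.ne')]
              ring_nf
            rw [e1]
            refine mul_le_mul_of_nonneg_left ?_ (Real.rpow_nonneg (ha i) q)
            have e2 : S ^ ((p - q) / q) = (S ^ (1 / q)) ^ (p - q) := by
              rw [← Real.rpow_mul hS0]; ring_nf
            rw [e2]
            exact Real.rpow_le_rpow (ha i) (hai i hi) (sub_nonneg.2 hqp)
        _ = S * S ^ ((p - q) / q) := by rw [← Finset.sum_mul]
        _ = S ^ (p / q) := by
            rw [show p / q = 1 + (p - q) / q by field_simp; ring, Real.rpow_add hS,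
              Real.rpow_one]
    calc (∑ i ∈ s, a i ^ p) ^ (1 / p) ≤ (S ^ (p / q)) ^ (1 / p) :=
          Real.rpow_le_rpow (Finset.sum_nonneg fun i _ => Real.rpow_nonneg (ha i) p)
            key (by positivity)
      _ = S ^ (1 / q) := by
          rw [← Real.rpow_mul hS0]
          congr 1
          field_simp

lemma aux_coeFn_sum {Ω : Type*} [MeasurableSpace Ω] {μ : Measure Ω} {u : ℝ≥0∞}
    {ι : Type*} (s : Finset ι) (h : ι → Lp ℝ u μ) :
    ⇑(∑ i ∈ s, h i) =ᵐ[μ] fun ω => ∑ i ∈ s, h i ω := by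
  classical
  induction s using Finset.induction with
  | empty => simp only [Finset.sum_empty]; exact Lp.coeFn_zero (E := ℝ) (p := u) (μ := μ)
  | insert _ _ hnotmem ih =>
    rename_i j t
    rw [Finset.sum_insert hnotmem]
    filter_upwards [Lp.coeFn_add (h j) (∑ i ∈ t, h i), ih] with ω h1 h2
    simp only [Finset.sum_insert hnotmem, h1, Pi.add_apply, h2]

lemma aux_key {Ω : Type*} [MeasurableSpace Ω] (μ : Measure Ω) (u : ℝ≥0∞)
    {a b : ℝ} (hab : Real.HolderConjugate a b) (n : ℕ) (c : Fin n → ℝ) (h : Fin n → Lp ℝ u μ) :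
    eLpNorm (⇑(∑ i, c i • h i)) u μ ≤
      ENNReal.ofReal ((∑ i, |c i| ^ a) ^ (1 / a)) *
        eLpNorm (fun ω => (∑ i, |h i ω| ^ b) ^ (1 / b)) u μ := by
  set C := (∑ i, |c i| ^ a) ^ (1 / a) with hCdef
  have hC0 : 0 ≤ C :=
    Real.rpow_nonneg (Finset.sum_nonneg fun i _ => Real.rpow_nonneg (abs_nonneg _) a) _
  have step1 : ⇑(∑ i, c i • h i) =ᵐ[μ] fun ω => ∑ i, c i * h i ω := by
    refine (aux_coeFn_sum Finset.univ (fun i => c i • h i)).trans ?_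
    have h2 : ∀ᵐ ω ∂μ, ∀ i, (c i • h i) ω = c i * h i ω := by
      rw [MeasureTheory.ae_all_iff]
      intro i
      filter_upwards [Lp.coeFn_smul (c i) (h i)] with ω hω
      simpa using hω
    filter_upwards [h2] with ω hω
    simp [hω]
  calc eLpNorm (⇑(∑ i, c i • h i)) u μ
      = eLpNorm (fun ω => ∑ i, c i * h i ω) u μ := eLpNorm_congr_ae step1
    _ ≤ eLpNorm (fun ω => C * (∑ i, |h i ω| ^ b) ^ (1 / b)) u μ := by
        refine eLpNorm_mono_real fun ω => ?_
        have hH := Real.inner_le_Lp_mul_Lq Finset.univ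
          (fun i => |c i|) (fun i => |h i ω|) hab
        calc ‖∑ i, c i * h i ω‖ ≤ ∑ i, |c i| * |h i ω| := by
              rw [Real.norm_eq_abs]
              exact (Finset.abs_sum_le_sum_abs _ _).trans (le_of_eq (by simp [abs_mul]))
          _ ≤ C * (∑ i, |h i ω| ^ b) ^ (1 / b) := by rw [hCdef, one_div]; simpa [abs_abs, one_div] using hH
    _ = ENNReal.ofReal C * eLpNorm (fun ω => (∑ i, |h i ω| ^ b) ^ (1 / b)) u μ := by
        rw [show (fun ω => C * (∑ i, |h i ω| ^ b) ^ (1 / b))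
            = C • (fun ω => (∑ i, |h i ω| ^ b) ^ (1 / b)) from rfl,
          eLpNorm_const_smul]
        congr 1
        rw [← ofReal_norm, Real.norm_of_nonneg hC0]

lemma aux_ne_top {Ω : Type*} [MeasurableSpace Ω] {μ : Measure Ω} {u : ℝ≥0∞} [Fact (1 ≤ u)]
    {r : ℝ} (hr : 1 ≤ r) {n : ℕ} (f : Fin n → Lp ℝ u μ) :
    eLpNorm (fun ω => (∑ i, |f i ω| ^ r) ^ (1 / r)) u μ ≠ ⊤ := by
  have h1 : eLpNorm (fun ω => (∑ i, |f i ω| ^ r) ^ (1 / r)) u μ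
      ≤ eLpNorm (fun ω => ∑ i, |f i ω|) u μ := by
    refine eLpNorm_mono_real fun ω => ?_
    rw [Real.norm_of_nonneg (Real.rpow_nonneg
      (Finset.sum_nonneg fun i _ => Real.rpow_nonneg (abs_nonneg _) r) _)]
    have := aux_rpow_mono Finset.univ (fun i => |f i ω|) (fun i => abs_nonneg _)
      zero_lt_one hr
    simpa using this
  have h2 : eLpNorm (fun ω => ∑ i, |f i ω|) u μ ≤ ∑ i, eLpNorm (⇑(f i)) u μ := by
    have e : (fun ω => ∑ i, |f i ω|) = ∑ i, (fun ω => |f i ω|) := by funext ω; simp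
    rw [e]
    refine (eLpNorm_sum_le (fun i _ => ?_) Fact.out).trans ?_
    · simpa [Real.norm_eq_abs] using (Lp.aestronglyMeasurable (f i)).norm
    · refine Finset.sum_le_sum fun i _ => le_of_eq ?_
      rw [show (fun ω => |f i ω|) = fun ω => ‖f i ω‖ by simp [Real.norm_eq_abs],
        eLpNorm_norm]
  exact (lt_of_le_of_lt (h1.trans h2)
    (ENNReal.sum_lt_top.2 fun i _ => Lp.eLpNorm_lt_top (f i))).ne

/-- The injective tensor norm is dominated by the lattice tensor quantity
`φ_{p,q}` on `L^u(μ) ⊗ L^v(ν)`: for norm-one functionals `x*`, `y*`,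
`|∑ᵢ x*(fᵢ) y*(gᵢ)| ≤ ‖(∑ᵢ |fᵢ|^q)^(1/q)‖_u ‖(∑ᵢ |gᵢ|^{p'})^(1/p')‖_v`. -/
theorem stmt9 {Ω Ω' : Type*} [MeasurableSpace Ω] [MeasurableSpace Ω']
    (μ : Measure Ω) (ν : Measure Ω') (u v : ℝ≥0∞) [Fact (1 ≤ u)] [Fact (1 ≤ v)]
    (p q p' : ℝ) (hq : 1 ≤ q) (hqp : q ≤ p) (hp : 1 < p)
    (hp' : 1 / p + 1 / p' = 1)
    (n : ℕ) (f : Fin n → Lp ℝ u μ) (g : Fin n → Lp ℝ v ν)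
    (x : Lp ℝ u μ →L[ℝ] ℝ) (y : Lp ℝ v ν →L[ℝ] ℝ)
    (hx : ‖x‖ ≤ 1) (hy : ‖y‖ ≤ 1) :
    ENNReal.ofReal |∑ i, x (f i) * y (g i)| ≤
      eLpNorm (fun ω => (∑ i, |f i ω| ^ q) ^ (1 / q)) u μ *
        eLpNorm (fun ω' => (∑ i, |g i ω'| ^ p') ^ (1 / p')) v ν := by
  have hp0 : 0 < p := lt_trans zero_lt_one hp
  have hip : 0 < 1 / p := by positivity
  have hip1 : 1 / p < 1 := by rw [div_lt_one hp0]; exact hp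
  have hip' : 0 < 1 / p' := by linarith
  have hp'pos : 0 < p' := by
    by_contra h
    push_neg at h
    have : 1 / p' ≤ 0 := div_nonpos_of_nonneg_of_nonpos zero_le_one h
    linarith
  have hp'1 : 1 < p' := by
    have h1 : 1 / p' < 1 := by linarith
    rwa [div_lt_one hp'pos] at h1
  have hpq' : Real.HolderConjugate p p' := ⟨by simpa [one_div] using hp', hp0, hp'pos⟩
  set F : Ω → ℝ := fun ω => (∑ i, |f i ω| ^ q) ^ (1 / q) with hF
  set G : Ω' → ℝ := fun ω' => (∑ i, |g i ω'| ^ p') ^ (1 / p') with hG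
  set SF := eLpNorm F u μ with hSF
  set SG := eLpNorm G v ν with hSG
  have hSFt : SF ≠ ⊤ := aux_ne_top hq f
  have hSGt : SG ≠ ⊤ := aux_ne_top hp'1.le g
  -- Step 2 : (∑ |y (g i)|^{p'})^{1/p'} ≤ SG.toReal
  set S := ∑ i, |y (g i)| ^ p' with hSdef
  have hS0 : 0 ≤ S := Finset.sum_nonneg fun i _ => Real.rpow_nonneg (abs_nonneg _) _
  have harith : p' + p = p * p' := by
    have h := hp'
    field_simp at h
    linarith
  have hpc : (p' - 1) * p = p' := by nlinarith
  set c : Fin n → ℝ := fun i => Real.sign (y (g i)) * |y (g i)| ^ (p' - 1) with hc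
  have hcy : ∀ i, c i * y (g i) = |y (g i)| ^ p' := by
    intro i
    rcases eq_or_ne (y (g i)) 0 with h | h
    · simp [hc, h, Real.sign_zero, Real.zero_rpow hp'pos.ne']
    · have habs : 0 < |y (g i)| := abs_pos.2 h
      have hsig : Real.sign (y (g i)) * y (g i) = |y (g i)| := by
        rcases h.lt_or_gt with hlt | hlt
        · rw [Real.sign_of_neg hlt, abs_of_neg hlt]; ring
        · rw [Real.sign_of_pos hlt, abs_of_pos hlt]; ring
      calc c i * y (g i)
          = |y (g i)| ^ (p' - 1) * (Real.sign (y (g i)) * y (g i)) := by rw [hc]; ring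
        _ = |y (g i)| ^ (p' - 1) * |y (g i)| := by rw [hsig]
        _ = |y (g i)| ^ p' := by
            rw [← Real.rpow_add_one habs.ne' (p' - 1)]
            congr 1
            ring
  have hcp : ∀ i, |c i| ^ p = |y (g i)| ^ p' := by
    intro i
    rcases eq_or_ne (y (g i)) 0 with h | h
    · simp [hc, h, Real.sign_zero, Real.zero_rpow hp0.ne', Real.zero_rpow hp'pos.ne']
    · have habs : 0 < |y (g i)| := abs_pos.2 h
      have h1 : |c i| = |y (g i)| ^ (p' - 1) := by
        rw [hc, abs_mul, abs_of_nonneg (Real.rpow_nonneg (abs_nonneg _) _)]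
        rcases h.lt_or_gt with hlt | hlt
        · rw [Real.sign_of_neg hlt]; simp
        · rw [Real.sign_of_pos hlt]; simp
      rw [h1, ← Real.rpow_mul (abs_nonneg _), hpc]
  have hCsum : ∑ i, |c i| ^ p = S := by
    rw [hSdef]; exact Finset.sum_congr rfl fun i _ => hcp i
  have hw2 : y (∑ i, c i • g i) = S := by
    rw [map_sum, hSdef]
    exact Finset.sum_congr rfl fun i _ => by rw [y.map_smul, smul_eq_mul, hcy i]
  have hkey2 := aux_key ν v hpq' n c g
  rw [hCsum] at hkey2
  have hstep2 : S ≤ S ^ (1 / p) * SG.toReal := by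
    calc S = y (∑ i, c i • g i) := hw2.symm
      _ ≤ |y (∑ i, c i • g i)| := le_abs_self _
      _ ≤ ‖y‖ * ‖∑ i, c i • g i‖ := (y.le_opNorm _)
      _ ≤ 1 * ‖∑ i, c i • g i‖ := by
          exact mul_le_mul_of_nonneg_right hy (norm_nonneg _)
      _ = (eLpNorm (⇑(∑ i, c i • g i)) v ν).toReal := by rw [one_mul, Lp.norm_def]
      _ ≤ (ENNReal.ofReal (S ^ (1 / p)) * SG).toReal := by
          refine ENNReal.toReal_mono (ENNReal.mul_ne_top ENNReal.ofReal_ne_top hSGt) ?_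
          exact hkey2
      _ = S ^ (1 / p) * SG.toReal := by
          rw [ENNReal.toReal_mul, ENNReal.toReal_ofReal (Real.rpow_nonneg hS0 _)]
  have hA : S ^ (1 / p') ≤ SG.toReal := by
    rcases eq_or_lt_of_le hS0 with hS | hS
    · rw [← hS, Real.zero_rpow (by positivity)]
      exact ENNReal.toReal_nonneg
    · have e : S ^ (1 / p') = S / S ^ (1 / p) := by
        rw [show 1 / p' = 1 - 1 / p by linarith, Real.rpow_sub hS, Real.rpow_one]
      rw [e, div_le_iff₀ (Real.rpow_pos_of_pos hS _)]
      exact hstep2.trans_eq (mul_comm _ _)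
  -- Step 1
  set w := ∑ i, y (g i) • f i with hw
  have h1 : ∑ i, x (f i) * y (g i) = x w := by
    rw [hw, map_sum]
    exact Finset.sum_congr rfl fun i _ => by rw [x.map_smul, smul_eq_mul, mul_comm]
  have hkey1 := aux_key μ u hpq'.symm n (fun i => y (g i)) f
  have hmono : eLpNorm (fun ω => (∑ i, |f i ω| ^ p) ^ (1 / p)) u μ ≤ SF := by
    refine eLpNorm_mono_real fun ω => ?_
    rw [Real.norm_of_nonneg (Real.rpow_nonneg
      (Finset.sum_nonneg fun i _ => Real.rpow_nonneg (abs_nonneg _) p) _)]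
    exact aux_rpow_mono Finset.univ (fun i => |f i ω|) (fun i => abs_nonneg _)
      (lt_of_lt_of_le zero_lt_one hq) hqp
  have hkey1' : eLpNorm (⇑w) u μ ≤ ENNReal.ofReal (S ^ (1 / p')) * SF := by
    refine hkey1.trans ?_
    have e : (∑ i, |y (g i)| ^ p') ^ (1 / p') = S ^ (1 / p') := by rw [hSdef]
    rw [e]
    exact mul_le_mul_right hmono _
  have hfinal : |∑ i, x (f i) * y (g i)| ≤ SG.toReal * SF.toReal := by
    rw [h1]
    calc |x w| ≤ ‖x‖ * ‖w‖ := x.le_opNorm w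
      _ ≤ 1 * ‖w‖ := mul_le_mul_of_nonneg_right hx (norm_nonneg _)
      _ = (eLpNorm (⇑w) u μ).toReal := by rw [one_mul, Lp.norm_def]
      _ ≤ (ENNReal.ofReal (S ^ (1 / p')) * SF).toReal :=
          ENNReal.toReal_mono (ENNReal.mul_ne_top ENNReal.ofReal_ne_top hSFt) hkey1'
      _ = S ^ (1 / p') * SF.toReal := by
          rw [ENNReal.toReal_mul, ENNReal.toReal_ofReal (Real.rpow_nonneg hS0 _)]
      _ ≤ SG.toReal * SF.toReal :=
          mul_le_mul_of_nonneg_right hA ENNReal.toReal_nonneg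
  calc ENNReal.ofReal |∑ i, x (f i) * y (g i)|
      ≤ ENNReal.ofReal (SG.toReal * SF.toReal) := ENNReal.ofReal_le_ofReal hfinal
    _ = SF * SG := by
        rw [mul_comm, ENNReal.ofReal_mul ENNReal.toReal_nonneg,
          ENNReal.ofReal_toReal hSFt, ENNReal.ofReal_toReal hSGt]
end

section
/- Let $(\Omega,\Sigma,\mu)$ and $(\Omega',\Sigma',\nu)$ be $\sigma$-finite measure spaces and let $1 \le q \le r \le p < \infty$. Then there is a constant $C$ depending only on $p$, $q$, $r$ such that every bounded linear operator $T : L^r(\mu) \to L^r(\nu)$ is $(p,q)$-regular with constant $C\|T\|$. -/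
open MeasureTheory ENNReal

lemma sum_rpow_exp_mono {ι : Type*} (s : Finset ι) (x : ι → ℝ≥0∞) {a b : ℝ}
    (ha : 0 < a) (hab : a ≤ b) :
    (∑ i ∈ s, x i ^ b) ^ (1/b) ≤ (∑ i ∈ s, x i ^ a) ^ (1/a) := by
  have hb : 0 < b := ha.trans_le hab
  induction s using Finset.cons_induction with
  | empty => simp [ENNReal.zero_rpow_of_pos, one_div, hb, ha, inv_pos]
  | cons j s hj IH =>
    rw [Finset.sum_cons, Finset.sum_cons]
    set A := ∑ i ∈ s, x i ^ a with hA
    set B := ∑ i ∈ s, x i ^ b with hB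
    have hBb : (B ^ (1/b)) ^ b = B := by
      rw [← ENNReal.rpow_mul, one_div, inv_mul_cancel₀ hb.ne', ENNReal.rpow_one]
    calc (x j ^ b + B) ^ (1/b) = (x j ^ b + (B ^ (1/b)) ^ b) ^ (1/b) := by rw [hBb]
      _ ≤ (x j ^ a + (B ^ (1/b)) ^ a) ^ (1/a) :=
          ENNReal.rpow_add_rpow_le _ _ ha hab
      _ ≤ (x j ^ a + (A ^ (1/a)) ^ a) ^ (1/a) := by
          gcongr (x j ^ a + ?_ ^ a) ^ (1/a)
      _ = (x j ^ a + A) ^ (1/a) := by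
          rw [← ENNReal.rpow_mul, one_div, inv_mul_cancel₀ ha.ne', ENNReal.rpow_one]

lemma enorm_sum_abs_rpow {n : ℕ} (g : Fin n → ℝ) {c : ℝ} (he : 0 < c) :
    (‖(∑ i, |g i| ^ c) ^ (1/c)‖₊ : ℝ≥0∞) = (∑ i, (‖g i‖₊ : ℝ≥0∞) ^ c) ^ (1/c) := by
  have hs : (0:ℝ) ≤ ∑ i, |g i| ^ c :=
    Finset.sum_nonneg fun i _ => Real.rpow_nonneg (abs_nonneg _) _
  rw [← enorm_eq_nnnorm, ← ofReal_norm, Real.norm_eq_abs,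
    abs_of_nonneg (Real.rpow_nonneg hs _),
    ← ENNReal.ofReal_rpow_of_nonneg hs (by positivity),
    ENNReal.ofReal_sum_of_nonneg (fun i _ => Real.rpow_nonneg (abs_nonneg _) _)]
  congr 1
  refine Finset.sum_congr rfl fun i _ => ?_
  rw [← ENNReal.ofReal_rpow_of_nonneg (abs_nonneg _) he.le, ← enorm_eq_nnnorm, Real.enorm_eq_ofReal_abs]
/-- For `1 ≤ q ≤ r ≤ p < ∞` there is a constant `C` depending only on the
exponents such that every bounded operator `T : L^r(μ) → L^r(ν)` between
σ-finite Lebesgue spaces is `(p,q)`-regular with constant `C‖T‖`. -/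
theorem stmt13 (p q r : ℝ) (hq : 1 ≤ q) (hqr : q ≤ r) (hrp : r ≤ p)
    [Fact (1 ≤ ENNReal.ofReal r)] :
    ∃ C : ℝ,
      ∀ (Ω : Type*) (Ω' : Type*) [MeasurableSpace Ω] [MeasurableSpace Ω']
        (μ : Measure Ω) (ν : Measure Ω') [SigmaFinite μ] [SigmaFinite ν]
        (T : Lp ℝ (ENNReal.ofReal r) μ →L[ℝ] Lp ℝ (ENNReal.ofReal r) ν),
        IsPQRegular (⇑T) p q (C * ‖T‖) := by
  have hq0 : (0:ℝ) < q := lt_of_lt_of_le one_pos hq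
  have hr0 : (0:ℝ) < r := lt_of_lt_of_le hq0 hqr
  have hp0 : (0:ℝ) < p := lt_of_lt_of_le hr0 hrp
  refine ⟨1, fun Ω Ω' _ _ μ ν _ _ T => ?_⟩
  intro n f
  rw [one_mul]
  have hr'0 : (ENNReal.ofReal r) ≠ 0 := by
    simp only [ne_eq, ENNReal.ofReal_eq_zero, not_le]; exact hr0
  have hr't : (ENNReal.ofReal r) ≠ ∞ := ENNReal.ofReal_ne_top
  have htr : (ENNReal.ofReal r).toReal = r := ENNReal.toReal_ofReal hr0.le
  have hrr : ∀ x : ℝ≥0∞, (x ^ (1/r)) ^ r = x := fun x => by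
    rw [← ENNReal.rpow_mul, one_div, inv_mul_cancel₀ hr0.ne', ENNReal.rpow_one]
  have key1 : ∀ i, (∫⁻ ω', (‖(T (f i)) ω'‖₊ : ℝ≥0∞) ^ r ∂ν)
      = (ENNReal.ofReal ‖T (f i)‖) ^ r := by
    intro i
    rw [Lp.norm_def, ENNReal.ofReal_toReal (Lp.eLpNorm_ne_top _),
      eLpNorm_eq_lintegral_rpow_enorm_toReal hr'0 hr't, htr, hrr]
    rfl
  have key2 : ∀ i, (∫⁻ ω, (‖(f i) ω‖₊ : ℝ≥0∞) ^ r ∂μ)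
      = (ENNReal.ofReal ‖f i‖) ^ r := by
    intro i
    rw [Lp.norm_def, ENNReal.ofReal_toReal (Lp.eLpNorm_ne_top _),
      eLpNorm_eq_lintegral_rpow_enorm_toReal hr'0 hr't, htr, hrr]
    rfl
  calc eLpNorm (fun ω' => (∑ i, |T (f i) ω'| ^ p) ^ (1/p)) (ENNReal.ofReal r) ν
      = (∫⁻ ω', ((∑ i, (‖T (f i) ω'‖₊ : ℝ≥0∞) ^ p) ^ (1/p)) ^ r ∂ν) ^ (1/r) := by
        rw [eLpNorm_eq_lintegral_rpow_enorm_toReal hr'0 hr't, htr]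
        congr 1
        refine lintegral_congr fun ω' => ?_
        rw [enorm_eq_nnnorm, enorm_sum_abs_rpow _ hp0]
    _ ≤ (∫⁻ ω', (∑ i, (‖T (f i) ω'‖₊ : ℝ≥0∞) ^ r) ∂ν) ^ (1/r) := by
        gcongr with ω'
        calc ((∑ i, (‖T (f i) ω'‖₊ : ℝ≥0∞) ^ p) ^ (1/p)) ^ r
            ≤ ((∑ i, (‖T (f i) ω'‖₊ : ℝ≥0∞) ^ r) ^ (1/r)) ^ r := by
              gcongr
              exact sum_rpow_exp_mono _ _ hr0 hrp
          _ = ∑ i, (‖T (f i) ω'‖₊ : ℝ≥0∞) ^ r := hrr _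
    _ = (∑ i, (ENNReal.ofReal ‖T (f i)‖) ^ r) ^ (1/r) := by
        simp only [← enorm_eq_nnnorm]
        rw [lintegral_finset_sum' _
          (fun i _ => ((Lp.aestronglyMeasurable (T (f i))).enorm).pow_const r)]
        exact congrArg (· ^ (1/r)) (Finset.sum_congr rfl fun i _ => key1 i)
    _ ≤ (∑ i, (ENNReal.ofReal (‖T‖ * ‖f i‖)) ^ r) ^ (1/r) := by
        gcongr with i
        exact T.le_opNorm _
    _ = ENNReal.ofReal ‖T‖ * (∑ i, (ENNReal.ofReal ‖f i‖) ^ r) ^ (1/r) := by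
        simp_rw [ENNReal.ofReal_mul (norm_nonneg T),
          ENNReal.mul_rpow_of_nonneg _ _ hr0.le, ← Finset.mul_sum,
          ENNReal.mul_rpow_of_nonneg _ _ (by positivity : (0:ℝ) ≤ 1/r),
          ← ENNReal.rpow_mul, mul_one_div_cancel hr0.ne', ENNReal.rpow_one]
    _ = ENNReal.ofReal ‖T‖ * (∫⁻ ω, (∑ i, (‖f i ω‖₊ : ℝ≥0∞) ^ r) ∂μ) ^ (1/r) := by
        simp only [← enorm_eq_nnnorm]
        rw [lintegral_finset_sum' _
          (fun i _ => ((Lp.aestronglyMeasurable (f i)).enorm).pow_const r)]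
        exact congrArg _ (congrArg (· ^ (1/r))
          (Finset.sum_congr rfl fun i _ => (key2 i).symm))
    _ ≤ ENNReal.ofReal ‖T‖ *
        (∫⁻ ω, (((∑ i, (‖f i ω‖₊ : ℝ≥0∞) ^ q) ^ (1/q)) ^ r) ∂μ) ^ (1/r) := by
        gcongr with ω
        calc ∑ i, (‖f i ω‖₊ : ℝ≥0∞) ^ r
            = ((∑ i, (‖f i ω‖₊ : ℝ≥0∞) ^ r) ^ (1/r)) ^ r := (hrr _).symm
          _ ≤ ((∑ i, (‖f i ω‖₊ : ℝ≥0∞) ^ q) ^ (1/q)) ^ r := by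
              gcongr
              exact sum_rpow_exp_mono _ _ hq0 hqr
    _ = ENNReal.ofReal ‖T‖ *
        eLpNorm (fun ω => (∑ i, |f i ω| ^ q) ^ (1/q)) (ENNReal.ofReal r) μ := by
        rw [eLpNorm_eq_lintegral_rpow_enorm_toReal hr'0 hr't, htr]
        refine congrArg _ (congrArg (· ^ (1/r)) (lintegral_congr fun ω => ?_))
        rw [enorm_eq_nnnorm, enorm_sum_abs_rpow _ hq0]
end

section
/- Let $(\Omega,\Sigma,\mu)$ and $(\Omega',\Sigma',\nu)$ be $\sigma$-finite measure spaces, $1 \le r_2 \le 2 \le r_1 < \infty$ and $1 \le q \le 2 \le p < \infty$. Then there is a constant $C$ depending only on $p$, $q$, $r_1$, $r_2$ such that every bounded linear operator $T : L^{r_1}(\mu) \to L^{r_2}(\nu)$ is $(p,q)$-regular with constant $C\|T\|$. -/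
open MeasureTheory ENNReal

open Finset Real Nat

noncomputable section
namespace Stmt14Aux

/-- sign associated to a boolean -/
def sg (b : Bool) : ℝ := if b then 1 else -1

lemma sg_sq (b : Bool) : sg b * sg b = 1 := by cases b <;> norm_num [sg]

lemma sg_abs (b : Bool) : |sg b| = 1 := by cases b <;> norm_num [sg]

lemma sg_not (b : Bool) : sg (!b) = - sg b := by cases b <;> norm_num [sg]

/-- average over sign vectors -/
def Esgn (n : ℕ) (F : (Fin n → Bool) → ℝ) : ℝ := (∑ s : Fin n → Bool, F s) / 2 ^ n

lemma card_signs (n : ℕ) : (Fintype.card (Fin n → Bool)) = 2 ^ n := by simp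

lemma Esgn_nonneg {n : ℕ} {F : (Fin n → Bool) → ℝ} (h : ∀ s, 0 ≤ F s) : 0 ≤ Esgn n F :=
  div_nonneg (sum_nonneg fun s _ => h s) (by positivity)

lemma Esgn_mono {n : ℕ} {F G : (Fin n → Bool) → ℝ} (h : ∀ s, F s ≤ G s) :
    Esgn n F ≤ Esgn n G :=
  div_le_div_of_nonneg_right (sum_le_sum fun s _ => h s) (by positivity) |>.trans_eq rfl

lemma Esgn_const (n : ℕ) (c : ℝ) : Esgn n (fun _ => c) = c := by
  simp [Esgn, card_univ]

lemma Esgn_add (n : ℕ) (F G : (Fin n → Bool) → ℝ) :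
    Esgn n (fun s => F s + G s) = Esgn n F + Esgn n G := by
  simp [Esgn, sum_add_distrib, add_div]

/-- product formula for the expectation of a product of coordinate functions -/
lemma Esgn_prod (n : ℕ) (g : Fin n → Bool → ℝ) :
    Esgn n (fun s => ∏ i, g i (s i)) = ∏ i, ((g i true + g i false) / 2) := by
  rw [Esgn, ← Fintype.prod_sum (fun i b => g i b)]
  rw [Finset.prod_div_distrib]
  congr 1
  · exact Finset.prod_congr rfl fun i _ => by
      rw [Fintype.sum_bool]
  · simp



lemma sum_sg_mul_sg {n : ℕ} {i j : Fin n} (hij : i ≠ j) :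
    ∑ s : Fin n → Bool, sg (s i) * sg (s j) = 0 := by
  classical
  refine Finset.sum_ninvolution (fun s => Function.update s i (!(s i))) ?_ ?_
    (fun _ => Finset.mem_univ _) ?_
  · intro s
    simp only [Function.update_self, Function.update_of_ne (Ne.symm hij), sg_not]
    ring
  · intro s _
    intro h
    have := congrFun h i
    simp only [Function.update_self] at this
    exact (Bool.not_ne_self (s i)) this
  · intro s
    funext k
    by_cases hk : k = i
    · subst hk; simp
    · simp [Function.update_of_ne hk]

/-- the second moment of a Rademacher sum -/
lemma Esgn_sq (n : ℕ) (a : Fin n → ℝ) :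
    Esgn n (fun s => (∑ i, sg (s i) * a i) ^ 2) = ∑ i, (a i) ^ 2 := by
  classical
  have : ∀ s : Fin n → Bool, (∑ i, sg (s i) * a i) ^ 2
      = ∑ i, ∑ j, (a i * a j) * (sg (s i) * sg (s j)) := by
    intro s
    rw [sq, Finset.sum_mul_sum]
    exact Finset.sum_congr rfl fun i _ => Finset.sum_congr rfl fun j _ => by ring
  rw [Esgn]
  simp_rw [this]
  rw [Finset.sum_comm]
  have : ∀ i : Fin n, ∑ s : Fin n → Bool, ∑ j, (a i * a j) * (sg (s i) * sg (s j))
      = 2 ^ n * (a i) ^ 2 := by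
    intro i
    rw [Finset.sum_comm]
    have h1 : ∀ j, ∑ s : Fin n → Bool, (a i * a j) * (sg (s i) * sg (s j))
        = (a i * a j) * ∑ s : Fin n → Bool, (sg (s i) * sg (s j)) := fun j => by
      rw [Finset.mul_sum]
    simp_rw [h1]
    rw [Fintype.sum_eq_single i]
    · simp_rw [sg_sq]
      simp [sq]
      ring
    · intro j hj
      rw [sum_sg_mul_sg (Ne.symm hj)]
      ring
  simp_rw [this]
  rw [← Finset.mul_sum]
  field_simp


lemma Esgn_smul (n : ℕ) (c : ℝ) (F : (Fin n → Bool) → ℝ) :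
    Esgn n (fun s => c * F s) = c * Esgn n F := by
  simp [Esgn, ← Finset.mul_sum, mul_div_assoc]

lemma Esgn_exp (n : ℕ) (b : Fin n → ℝ) :
    Esgn n (fun s => exp (∑ i, sg (s i) * b i)) = ∏ i, cosh (b i) := by
  have h : ∀ s : Fin n → Bool, exp (∑ i, sg (s i) * b i) = ∏ i, exp (sg (s i) * b i) :=
    fun s => Real.exp_sum _ _
  simp_rw [h]
  rw [Esgn_prod n (fun i c => exp (sg c * b i))]
  refine Finset.prod_congr rfl fun i _ => ?_
  rw [Real.cosh_eq]
  norm_num [sg]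

lemma Esgn_even_moment (n : ℕ) (a : Fin n → ℝ) (m : ℕ) (hm : 1 ≤ m) :
    Esgn n (fun s => (∑ i, sg (s i) * a i) ^ (2 * m))
      ≤ 2 * Real.exp 1 * (2 * m)! * (∑ i, (a i) ^ 2) ^ m := by
  set σ2 := ∑ i, (a i) ^ 2 with hσ2
  have hσ2nn : 0 ≤ σ2 := Finset.sum_nonneg fun i _ => sq_nonneg _
  rcases eq_or_lt_of_le hσ2nn with h0 | hpos
  · -- all a i = 0
    have hai : ∀ i, a i = 0 := by
      intro i
      have := (Finset.sum_eq_zero_iff_of_nonneg (fun i _ => sq_nonneg (a i))).1 h0.symm i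
        (Finset.mem_univ i)
      exact pow_eq_zero_iff (by norm_num) |>.1 this
    have : ∀ s : Fin n → Bool, (∑ i, sg (s i) * a i) ^ (2 * m) = 0 := by
      intro s
      have : (∑ i, sg (s i) * a i) = 0 := by simp [hai]
      rw [this]
      exact zero_pow (by omega)
    simp_rw [this]
    have : Esgn n (fun _ => (0:ℝ)) = 0 := by simp [Esgn]
    rw [this]
    positivity
  · set σ := Real.sqrt σ2 with hσ
    have hσpos : 0 < σ := Real.sqrt_pos.2 hpos
    set t := σ⁻¹ with ht
    have htpos : 0 < t := inv_pos.2 hσpos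
    have hσ2m : σ ^ (2 * m) = σ2 ^ m := by
      rw [pow_mul, Real.sq_sqrt hσ2nn]
    have key : ∀ x : ℝ, x ^ (2 * m)
        ≤ (2 * m)! * σ2 ^ m * (exp (t * x) + exp (-(t * x))) := by
      intro x
      have h1 : x ^ (2 * m) = σ2 ^ m * (t * x) ^ (2 * m) := by
        rw [mul_pow, ← hσ2m, ← mul_assoc, ← mul_pow]
        rw [mul_inv_cancel₀ hσpos.ne']
        simp
      have h2 : (t * x) ^ (2 * m) = |t * x| ^ (2 * m) := by
        rw [← abs_pow, abs_of_nonneg (even_two_mul m |>.pow_nonneg _)]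
      have h3 : |t * x| ^ (2 * m) ≤ (2 * m)! * exp |t * x| := by
        have := Real.pow_div_factorial_le_exp (|t * x|) (abs_nonneg (t * x)) (2 * m)
        rw [div_le_iff₀ (by positivity)] at this
        linarith [this]
      have h4 : exp |t * x| ≤ exp (t * x) + exp (-(t * x)) := by
        rcases abs_cases (t * x) with ⟨h, _⟩ | ⟨h, _⟩ <;> rw [h] <;>
          [linarith [Real.exp_pos (-(t*x))]; linarith [Real.exp_pos (t*x)]]
      calc x ^ (2 * m) = σ2 ^ m * (t * x) ^ (2 * m) := h1
        _ ≤ σ2 ^ m * ((2 * m)! * (exp (t * x) + exp (-(t * x)))) := by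
            rw [h2]
            refine mul_le_mul_of_nonneg_left ?_ (by positivity)
            exact h3.trans (mul_le_mul_of_nonneg_left h4 (by positivity))
        _ = (2 * m)! * σ2 ^ m * (exp (t * x) + exp (-(t * x))) := by ring
    have hmono := Esgn_mono (fun s => key (∑ i, sg (s i) * a i))
    refine hmono.trans ?_
    have hexp1 : Esgn n (fun s => exp (t * ∑ i, sg (s i) * a i)) = ∏ i, cosh (t * a i) := by
      have : ∀ s : Fin n → Bool, t * ∑ i, sg (s i) * a i = ∑ i, sg (s i) * (t * a i) := by
        intro s; rw [Finset.mul_sum]; exact Finset.sum_congr rfl fun i _ => by ring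
      simp_rw [this]
      exact Esgn_exp n _
    have hexp2 : Esgn n (fun s => exp (-(t * ∑ i, sg (s i) * a i))) = ∏ i, cosh (t * a i) := by
      have : ∀ s : Fin n → Bool, -(t * ∑ i, sg (s i) * a i) = ∑ i, sg (s i) * (-(t * a i)) := by
        intro s; rw [Finset.mul_sum, ← Finset.sum_neg_distrib]
        exact Finset.sum_congr rfl fun i _ => by ring
      simp_rw [this]
      rw [Esgn_exp n _]
      exact Finset.prod_congr rfl fun i _ => by rw [Real.cosh_neg]
    have hcosh : ∏ i, cosh (t * a i) ≤ exp 1 := by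
      calc ∏ i, cosh (t * a i) ≤ ∏ i, exp ((t * a i) ^ 2 / 2) :=
            Finset.prod_le_prod (fun i _ => (Real.cosh_pos _).le)
              (fun i _ => Real.cosh_le_exp_half_sq _)
        _ = exp (∑ i, (t * a i) ^ 2 / 2) := (Real.exp_sum _ _).symm
        _ ≤ exp 1 := by
            refine Real.exp_le_exp.2 ?_
            have : ∑ i, (t * a i) ^ 2 / 2 = t ^ 2 * σ2 / 2 := by
              rw [hσ2, Finset.mul_sum, Finset.sum_div]
              exact Finset.sum_congr rfl fun i _ => by ring
            rw [this, ht, ← Real.sqrt_inv, Real.sq_sqrt (inv_nonneg.2 hσ2nn),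
              inv_mul_cancel₀ hpos.ne']
            norm_num
    have hE : Esgn n (fun s =>
        (2 * m)! * σ2 ^ m * (exp (t * ∑ i, sg (s i) * a i) + exp (-(t * ∑ i, sg (s i) * a i))))
        = (2 * m)! * σ2 ^ m * (2 * ∏ i, cosh (t * a i)) := by
      rw [Esgn_smul, Esgn_add, hexp1, hexp2]
      ring
    rw [hE]
    have : ((2*m)! : ℝ) * σ2 ^ m * (2 * ∏ i, cosh (t * a i))
        ≤ ((2*m)! : ℝ) * σ2 ^ m * (2 * exp 1) := by
      refine mul_le_mul_of_nonneg_left ?_ (by positivity)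
      linarith [hcosh]
    refine this.trans ?_
    apply le_of_eq
    ring


lemma Esgn_eq_sum_mul (n : ℕ) (F : (Fin n → Bool) → ℝ) :
    Esgn n F = ∑ s : Fin n → Bool, ((2:ℝ) ^ n)⁻¹ * F s := by
  simp [Esgn, div_eq_mul_inv, ← Finset.sum_mul, mul_comm]

lemma sum_weights (n : ℕ) : ∑ _s : Fin n → Bool, ((2:ℝ) ^ n)⁻¹ = 1 := by
  rw [Finset.sum_const, Finset.card_univ, nsmul_eq_mul]
  have : (Fintype.card (Fin n → Bool) : ℝ) = 2 ^ n := by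
    simp
  rw [this, mul_inv_cancel₀ (by positivity)]

/-- Khintchine inequality, upper bound, for exponents `r ≥ 2`. -/
lemma khintchine_upper (r : ℝ) (hr : 2 ≤ r) :
    ∃ B : ℝ, 1 ≤ B ∧ ∀ (n : ℕ) (a : Fin n → ℝ),
      Esgn n (fun s => |∑ i, sg (s i) * a i| ^ r)
        ≤ B * (∑ i, (a i) ^ 2) ^ (r / 2) := by
  set m : ℕ := ⌈r / 2⌉₊ with hm
  have hm1 : 1 ≤ m := Nat.one_le_ceil_iff.2 (by linarith)
  have hmR : (0:ℝ) < (m:ℝ) := by exact_mod_cast hm1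
  have hr2m : r ≤ 2 * m := by
    have := Nat.le_ceil (r / 2)
    rw [← hm] at this
    linarith
  have hr0 : (0:ℝ) < r := by linarith
  have hfact1 : (1:ℝ) ≤ ((2 * m)! : ℝ) := by
    exact_mod_cast Nat.one_le_iff_ne_zero.2 (2*m).factorial_ne_zero
  refine ⟨2 * Real.exp 1 * (2 * m)!, by nlinarith [Real.exp_one_gt_d9], ?_⟩
  intro n a
  set B : ℝ := 2 * Real.exp 1 * (2 * m)! with hB
  have hB1 : (1:ℝ) ≤ B := by nlinarith [Real.exp_one_gt_d9]
  set σ2 := ∑ i, (a i) ^ 2 with hσ2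
  have hσ2nn : 0 ≤ σ2 := Finset.sum_nonneg fun i _ => sq_nonneg _
  have hznn : ∀ s : Fin n → Bool, 0 ≤ |∑ i, sg (s i) * a i| ^ r :=
    fun s => Real.rpow_nonneg (abs_nonneg _) _
  have hEnn : 0 ≤ Esgn n (fun s => |∑ i, sg (s i) * a i| ^ r) := Esgn_nonneg hznn
  have hexp : r * (2 * (m:ℝ) / r) = ((2 * m : ℕ) : ℝ) := by
    push_cast
    field_simp
  -- Jensen
  have hjensen : (Esgn n (fun s => |∑ i, sg (s i) * a i| ^ r)) ^ (2 * (m:ℝ) / r)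
      ≤ Esgn n (fun s => (∑ i, sg (s i) * a i) ^ (2 * m)) := by
    have h0 : ∀ s : Fin n → Bool,
        (|∑ i, sg (s i) * a i| ^ r) ^ (2 * (m:ℝ) / r) = (∑ i, sg (s i) * a i) ^ (2 * m) := by
      intro s
      rw [← Real.rpow_mul (abs_nonneg _), hexp, Real.rpow_natCast, pow_abs,
        abs_of_nonneg ((even_two_mul m).pow_nonneg _)]
    calc (Esgn n (fun s => |∑ i, sg (s i) * a i| ^ r)) ^ (2 * (m:ℝ) / r)
        ≤ Esgn n (fun s => (|∑ i, sg (s i) * a i| ^ r) ^ (2 * (m:ℝ) / r)) := by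
          rw [Esgn_eq_sum_mul, Esgn_eq_sum_mul]
          exact Real.rpow_arith_mean_le_arith_mean_rpow univ _ _
            (fun i _ => by positivity) (sum_weights n) (fun s _ => hznn s)
            (by rw [le_div_iff₀ hr0]; linarith)
      _ = Esgn n (fun s => (∑ i, sg (s i) * a i) ^ (2 * m)) := by
          simp_rw [h0]
  have hmom := (hjensen.trans (Esgn_even_moment n a m hm1))
  -- undo the power
  have key : Esgn n (fun s => |∑ i, sg (s i) * a i| ^ r) ≤ (B * σ2 ^ m) ^ (r / (2 * m)) := by
    have h1 : Esgn n (fun s => |∑ i, sg (s i) * a i| ^ r)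
        = ((Esgn n (fun s => |∑ i, sg (s i) * a i| ^ r)) ^ (2 * (m:ℝ) / r)) ^ (r / (2 * m)) := by
      rw [← Real.rpow_mul hEnn, show (2 * (m:ℝ) / r) * (r / (2 * m)) = 1 by
        field_simp, Real.rpow_one]
    rw [h1]
    exact Real.rpow_le_rpow (Real.rpow_nonneg hEnn _) hmom (by positivity)
  refine key.trans ?_
  have hBnn : (0:ℝ) ≤ B := by linarith
  rw [Real.mul_rpow hBnn (by positivity)]
  have h2 : (σ2 ^ m) ^ (r / (2 * m)) = σ2 ^ (r / 2) := by
    rw [← Real.rpow_natCast_mul hσ2nn, show (m:ℝ) * (r / (2 * m)) = r / 2 by field_simp]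
  rw [h2]
  refine mul_le_mul_of_nonneg_right ?_ (Real.rpow_nonneg hσ2nn _)
  calc B ^ (r / (2 * m)) ≤ B ^ (1:ℝ) :=
        Real.rpow_le_rpow_of_exponent_le hB1 (by rw [div_le_one (by positivity)]; linarith)
    _ = B := Real.rpow_one B

/-- Khintchine inequality, lower bound, for exponents `1 ≤ r ≤ 2`. -/
lemma khintchine_lower (r : ℝ) (hr1 : 1 ≤ r) (hr2 : r ≤ 2) :
    ∃ A : ℝ, 0 < A ∧ ∀ (n : ℕ) (a : Fin n → ℝ),
      A * (∑ i, (a i) ^ 2) ^ (r / 2)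
        ≤ Esgn n (fun s => |∑ i, sg (s i) * a i| ^ r) := by
  obtain ⟨B, hB1, hB⟩ := khintchine_upper (4 - r) (by linarith)
  have hBpos : 0 < B := by linarith
  refine ⟨B⁻¹, inv_pos.2 hBpos, ?_⟩
  intro n a
  set σ2 := ∑ i, (a i) ^ 2 with hσ2
  have hσ2nn : 0 ≤ σ2 := Finset.sum_nonneg fun i _ => sq_nonneg _
  have hEnn : 0 ≤ Esgn n (fun s => |∑ i, sg (s i) * a i| ^ r) :=
    Esgn_nonneg fun s => Real.rpow_nonneg (abs_nonneg _) _
  rcases eq_or_lt_of_le hσ2nn with h0 | hpos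
  · rw [← h0, Real.zero_rpow (by positivity : r / 2 ≠ 0)]
    simpa using hEnn
  -- Cauchy-Schwarz
  have hw : (0:ℝ) ≤ ((2:ℝ) ^ n)⁻¹ := by positivity
  have hCS : (∑ s : Fin n → Bool,
        (Real.sqrt ((2:ℝ)^n)⁻¹ * |∑ i, sg (s i) * a i| ^ (r/2)) *
        (Real.sqrt ((2:ℝ)^n)⁻¹ * |∑ i, sg (s i) * a i| ^ ((4-r)/2))) ^ 2
      ≤ (∑ s : Fin n → Bool,
          (Real.sqrt ((2:ℝ)^n)⁻¹ * |∑ i, sg (s i) * a i| ^ (r/2)) ^ 2) *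
        (∑ s : Fin n → Bool,
          (Real.sqrt ((2:ℝ)^n)⁻¹ * |∑ i, sg (s i) * a i| ^ ((4-r)/2)) ^ 2) :=
    Finset.sum_mul_sq_le_sq_mul_sq univ _ _
  have hfg : ∀ s : Fin n → Bool,
      (Real.sqrt ((2:ℝ)^n)⁻¹ * |∑ i, sg (s i) * a i| ^ (r/2)) *
      (Real.sqrt ((2:ℝ)^n)⁻¹ * |∑ i, sg (s i) * a i| ^ ((4-r)/2))
      = ((2:ℝ)^n)⁻¹ * (∑ i, sg (s i) * a i) ^ 2 := by
    intro s
    have h1 : Real.sqrt ((2:ℝ)^n)⁻¹ * Real.sqrt ((2:ℝ)^n)⁻¹ = ((2:ℝ)^n)⁻¹ :=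
      Real.mul_self_sqrt hw
    have h2 : |∑ i, sg (s i) * a i| ^ (r/2) * |∑ i, sg (s i) * a i| ^ ((4-r)/2)
        = (∑ i, sg (s i) * a i) ^ 2 := by
      rw [← Real.rpow_add_of_nonneg (abs_nonneg _) (by linarith) (by linarith),
        show r / 2 + (4 - r) / 2 = ((2:ℕ):ℝ) by push_cast; ring, Real.rpow_natCast]
      simp [sq_abs]
    calc _ = (Real.sqrt ((2:ℝ)^n)⁻¹ * Real.sqrt ((2:ℝ)^n)⁻¹) *
          (|∑ i, sg (s i) * a i| ^ (r/2) * |∑ i, sg (s i) * a i| ^ ((4-r)/2)) := by ring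
      _ = _ := by rw [h1, h2]
  have hf2 : ∀ (u : ℝ), ∀ s : Fin n → Bool,
      (Real.sqrt ((2:ℝ)^n)⁻¹ * |∑ i, sg (s i) * a i| ^ u) ^ 2
      = ((2:ℝ)^n)⁻¹ * |∑ i, sg (s i) * a i| ^ (2 * u) := by
    intro u s
    rw [mul_pow, Real.sq_sqrt hw, ← Real.rpow_natCast (|∑ i, sg (s i) * a i| ^ u) 2,
      ← Real.rpow_mul (abs_nonneg _)]
    norm_num
    rw [mul_comm u 2]
  simp_rw [hfg, hf2] at hCS
  rw [show (2:ℝ) * (r / 2) = r by ring, show (2:ℝ) * ((4-r) / 2) = 4 - r by ring] at hCS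
  rw [← Esgn_eq_sum_mul, ← Esgn_eq_sum_mul, ← Esgn_eq_sum_mul, Esgn_sq] at hCS
  -- now hCS : σ2 ^ 2 ≤ Esgn (|S|^r) * Esgn (|S|^{4-r})
  have h4r := hB n a
  rw [← hσ2] at h4r hCS
  have hD : 0 < σ2 ^ ((4 - r) / 2) := Real.rpow_pos_of_pos hpos _
  have hstep : σ2 ^ (r / 2) * σ2 ^ ((4 - r) / 2)
      ≤ (Esgn n (fun s => |∑ i, sg (s i) * a i| ^ r) * B) * σ2 ^ ((4 - r) / 2) := by
    have hL : σ2 ^ (r / 2) * σ2 ^ ((4 - r) / 2) = σ2 ^ (2:ℕ) := by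
      rw [← Real.rpow_add hpos, show r / 2 + (4 - r) / 2 = ((2:ℕ):ℝ) by push_cast; ring,
        Real.rpow_natCast]
    rw [hL]
    calc σ2 ^ (2:ℕ) ≤ Esgn n (fun s => |∑ i, sg (s i) * a i| ^ r) *
          Esgn n (fun s => |∑ i, sg (s i) * a i| ^ (4 - r)) := hCS
      _ ≤ Esgn n (fun s => |∑ i, sg (s i) * a i| ^ r) * (B * σ2 ^ ((4 - r) / 2)) :=
          mul_le_mul_of_nonneg_left h4r hEnn
      _ = (Esgn n (fun s => |∑ i, sg (s i) * a i| ^ r) * B) * σ2 ^ ((4 - r) / 2) := by ring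
  have hmain : σ2 ^ (r / 2) ≤ Esgn n (fun s => |∑ i, sg (s i) * a i| ^ r) * B :=
    le_of_mul_le_mul_right hstep hD
  calc B⁻¹ * σ2 ^ (r / 2)
      ≤ B⁻¹ * (Esgn n (fun s => |∑ i, sg (s i) * a i| ^ r) * B) :=
        mul_le_mul_of_nonneg_left hmain (by positivity)
    _ = Esgn n (fun s => |∑ i, sg (s i) * a i| ^ r) := by
        field_simp


/-- monotonicity of `ℓ^p` norms on finite tuples -/
lemma lp_mono {ι : Type*} [Fintype ι] (x : ι → ℝ) (hx : ∀ i, 0 ≤ x i) {a b : ℝ}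
    (ha : 0 < a) (hab : a ≤ b) :
    (∑ i, x i ^ b) ^ (1/b) ≤ (∑ i, x i ^ a) ^ (1/a) := by
  have hb : 0 < b := lt_of_lt_of_le ha hab
  set S := ∑ i, x i ^ a with hS
  have hSnn : 0 ≤ S := Finset.sum_nonneg fun i _ => Real.rpow_nonneg (hx i) _
  have hle : ∀ i, x i ^ a ≤ S := fun i =>
    Finset.single_le_sum (fun j _ => Real.rpow_nonneg (hx j) _) (Finset.mem_univ i)
  have hsum : ∑ i, x i ^ b ≤ S ^ (b/a) := by
    have h1 : ∀ i, x i ^ b ≤ x i ^ a * S ^ ((b-a)/a) := by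
      intro i
      have h2 : x i ^ (b-a) ≤ S ^ ((b-a)/a) := by
        have h3 : (x i ^ a) ^ ((b-a)/a) ≤ S ^ ((b-a)/a) :=
          Real.rpow_le_rpow (Real.rpow_nonneg (hx i) _) (hle i)
            (div_nonneg (by linarith) ha.le)
        rwa [← Real.rpow_mul (hx i), show a * ((b - a)/a) = b - a by field_simp] at h3
      calc x i ^ b = x i ^ a * x i ^ (b-a) := by
            rw [← Real.rpow_add_of_nonneg (hx i) ha.le (by linarith)]
            ring_nf
        _ ≤ x i ^ a * S ^ ((b-a)/a) :=
            mul_le_mul_of_nonneg_left h2 (Real.rpow_nonneg (hx i) _)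
    calc ∑ i, x i ^ b ≤ ∑ i, x i ^ a * S ^ ((b-a)/a) := Finset.sum_le_sum fun i _ => h1 i
      _ = S * S ^ ((b-a)/a) := by rw [← Finset.sum_mul]
      _ = S ^ ((1:ℝ)) * S ^ ((b-a)/a) := by rw [Real.rpow_one]
      _ = S ^ (b/a) := by
          rw [← Real.rpow_add_of_nonneg hSnn (by norm_num)
            (div_nonneg (by linarith) ha.le)]
          congr 1
          field_simp
          ring
  calc (∑ i, x i ^ b) ^ (1/b) ≤ (S ^ (b/a)) ^ (1/b) :=
        Real.rpow_le_rpow (Finset.sum_nonneg fun i _ => Real.rpow_nonneg (hx i) _) hsum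
          (by positivity)
    _ = S ^ (1/a) := by
        rw [← Real.rpow_mul hSnn]
        congr 1
        field_simp


/-- coercion of a finite sum in Lp -/
lemma Lp_coeFn_sum {α E : Type*} [MeasurableSpace α] [NormedAddCommGroup E] {μ : Measure α}
    {P : ℝ≥0∞} {ι : Type*} (t : Finset ι) (f : ι → Lp E P μ) :
    ⇑(∑ i ∈ t, f i) =ᵐ[μ] fun x => ∑ i ∈ t, f i x := by
  classical
  induction t using Finset.induction_on with
  | empty => simp only [Finset.sum_empty]; exact Lp.coeFn_zero E P μ
  | insert a s hnot ih =>
    rw [Finset.sum_insert hnot]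
    filter_upwards [Lp.coeFn_add (f a) (∑ i ∈ s, f i), ih] with x hx hx2
    rw [hx]
    simp only [Pi.add_apply, hx2]
    rw [Finset.sum_insert hnot]

/-- eLpNorm formula for a nonnegative function -/
lemma eLpNorm_formula {α : Type*} [MeasurableSpace α] (μ : Measure α) {r : ℝ} (hr : 0 < r)
    (h : α → ℝ) (hh : ∀ x, 0 ≤ h x) :
    eLpNorm h (ENNReal.ofReal r) μ = (∫⁻ x, ENNReal.ofReal (h x ^ r) ∂μ) ^ (1/r) := by
  rw [eLpNorm_eq_lintegral_rpow_enorm_toReal (by simpa using hr) ENNReal.ofReal_ne_top,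
    ENNReal.toReal_ofReal hr.le]
  congr 1
  refine lintegral_congr fun x => ?_
  rw [← ofReal_norm, Real.norm_eq_abs, abs_of_nonneg (hh x),
    ← ENNReal.ofReal_rpow_of_nonneg (hh x) hr.le]

lemma eLpNorm_formula_pow {α : Type*} [MeasurableSpace α] (μ : Measure α) {r : ℝ} (hr : 0 < r)
    (h : α → ℝ) (hh : ∀ x, 0 ≤ h x) :
    (eLpNorm h (ENNReal.ofReal r) μ) ^ r = ∫⁻ x, ENNReal.ofReal (h x ^ r) ∂μ := by
  rw [eLpNorm_formula μ hr h hh, ← ENNReal.rpow_mul, one_div, inv_mul_cancel₀ hr.ne',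
    ENNReal.rpow_one]

/-- integral representation of the norm of an Lp element -/
lemma lintegral_rpow_Lp {α : Type*} [MeasurableSpace α] {μ : Measure α} {r : ℝ} (hr : 0 < r)
    (g : Lp ℝ (ENNReal.ofReal r) μ) :
    ∫⁻ x, ENNReal.ofReal (|g x| ^ r) ∂μ = ENNReal.ofReal (‖g‖ ^ r) := by
  have h1 : ∫⁻ x, ENNReal.ofReal (|g x| ^ r) ∂μ = (eLpNorm g (ENNReal.ofReal r) μ) ^ r := by
    rw [eLpNorm_eq_lintegral_rpow_enorm_toReal (by simpa using hr) ENNReal.ofReal_ne_top,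
      ENNReal.toReal_ofReal hr.le, ← ENNReal.rpow_mul, one_div, inv_mul_cancel₀ hr.ne',
      ENNReal.rpow_one]
    refine lintegral_congr fun x => ?_
    rw [← ofReal_norm, Real.norm_eq_abs,
      ← ENNReal.ofReal_rpow_of_nonneg (abs_nonneg _) hr.le]
  rw [h1, Lp.norm_def, ← ENNReal.ofReal_rpow_of_nonneg ENNReal.toReal_nonneg hr.le,
    ENNReal.ofReal_toReal (Lp.eLpNorm_ne_top g)]



lemma Esgn_jensen (n : ℕ) (g : (Fin n → Bool) → ℝ) (hg : ∀ s, 0 ≤ g s) {u v : ℝ}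
    (hu : 0 < u) (huv : u ≤ v) :
    Esgn n (fun s => g s ^ u) ≤ (Esgn n (fun s => g s ^ v)) ^ (u / v) := by
  have hv : 0 < v := lt_of_lt_of_le hu huv
  have hEnn : 0 ≤ Esgn n (fun s => g s ^ u) :=
    Esgn_nonneg fun s => Real.rpow_nonneg (hg s) _
  have hjensen : (Esgn n (fun s => g s ^ u)) ^ (v / u) ≤ Esgn n (fun s => g s ^ v) := by
    have h0 : ∀ s, (g s ^ u) ^ (v / u) = g s ^ v := by
      intro s
      rw [← Real.rpow_mul (hg s), show u * (v / u) = v by field_simp]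
    calc (Esgn n (fun s => g s ^ u)) ^ (v / u)
        ≤ Esgn n (fun s => (g s ^ u) ^ (v / u)) := by
          rw [Esgn_eq_sum_mul, Esgn_eq_sum_mul]
          exact Real.rpow_arith_mean_le_arith_mean_rpow univ _ _
            (fun i _ => by positivity) (sum_weights n)
            (fun s _ => Real.rpow_nonneg (hg s) _)
            ((one_le_div hu).2 huv)
      _ = Esgn n (fun s => g s ^ v) := by simp_rw [h0]
  calc Esgn n (fun s => g s ^ u)
      = ((Esgn n (fun s => g s ^ u)) ^ (v / u)) ^ (u / v) := by
        rw [← Real.rpow_mul hEnn, show (v / u) * (u / v) = 1 by field_simp, Real.rpow_one]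
    _ ≤ (Esgn n (fun s => g s ^ v)) ^ (u / v) :=
        Real.rpow_le_rpow (Real.rpow_nonneg hEnn _) hjensen (by positivity)

lemma two_pow_inv_ne_top (n : ℕ) : (((2:ℝ≥0∞) ^ n)⁻¹ : ℝ≥0∞) ≠ ∞ := by
  simp [ENNReal.inv_ne_top]

lemma ofReal_Esgn (n : ℕ) (F : (Fin n → Bool) → ℝ) (hF : ∀ s, 0 ≤ F s) :
    ENNReal.ofReal (Esgn n F) = ((2:ℝ≥0∞) ^ n)⁻¹ * ∑ s, ENNReal.ofReal (F s) := by
  have h2 : ENNReal.ofReal (((2:ℝ) ^ n)⁻¹) = ((2:ℝ≥0∞) ^ n)⁻¹ := by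
    rw [ENNReal.ofReal_inv_of_pos (by positivity), ENNReal.ofReal_pow (by norm_num)]
    norm_num
  rw [Esgn, div_eq_inv_mul, ENNReal.ofReal_mul (by positivity),
    ENNReal.ofReal_sum_of_nonneg (fun s _ => hF s), h2]

lemma coeFn_signed_sum {α : Type*} [MeasurableSpace α] {μ : Measure α} {P : ℝ≥0∞} (n : ℕ)
    [Fact (1 ≤ P)] (g : Fin n → Lp ℝ P μ) (s : Fin n → Bool) :
    ⇑(∑ i, sg (s i) • g i) =ᵐ[μ] fun x => ∑ i, sg (s i) * g i x := by
  refine (Lp_coeFn_sum univ _).trans ?_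
  have h : ∀ᵐ x ∂μ, ∀ i : Fin n, (sg (s i) • g i) x = sg (s i) * g i x := by
    rw [MeasureTheory.ae_all_iff]
    intro i
    filter_upwards [Lp.coeFn_smul (sg (s i)) (g i)] with x hx
    rw [hx]
    simp [smul_eq_mul]
  filter_upwards [h] with x hx
  exact Finset.sum_congr rfl fun i _ => hx i

end Stmt14Aux


open Stmt14Aux in
/-- For `1 ≤ r₂ ≤ 2 ≤ r₁ < ∞` and `1 ≤ q ≤ 2 ≤ p < ∞` there is a constant
`C` depending only on the exponents such that every bounded operator
`T : L^{r₁}(μ) → L^{r₂}(ν)` is `(p,q)`-regular with constant `C‖T‖`. -/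
theorem stmt14 (p q r₁ r₂ : ℝ) (hr₂ : 1 ≤ r₂) (hr₂2 : r₂ ≤ 2) (h2r₁ : 2 ≤ r₁)
    (hq : 1 ≤ q) (hq2 : q ≤ 2) (h2p : 2 ≤ p)
    [Fact (1 ≤ ENNReal.ofReal r₁)] [Fact (1 ≤ ENNReal.ofReal r₂)] :
    ∃ C : ℝ,
      ∀ (Ω : Type*) (Ω' : Type*) [MeasurableSpace Ω] [MeasurableSpace Ω']
        (μ : Measure Ω) (ν : Measure Ω') [SigmaFinite μ] [SigmaFinite ν]
        (T : Lp ℝ (ENNReal.ofReal r₁) μ →L[ℝ] Lp ℝ (ENNReal.ofReal r₂) ν),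
        IsPQRegular (⇑T) p q (C * ‖T‖) := by
  have hr₂pos : (0:ℝ) < r₂ := by linarith
  have hr₁pos : (0:ℝ) < r₁ := by linarith
  have hqpos : (0:ℝ) < q := by linarith
  obtain ⟨A, hApos, hA⟩ := khintchine_lower r₂ hr₂ hr₂2
  obtain ⟨B, hB1, hB⟩ := khintchine_upper r₁ h2r₁
  have hBpos : (0:ℝ) < B := by linarith
  refine ⟨A⁻¹ ^ (1 / r₂) * B ^ (1 / r₁), ?_⟩
  intro Ω Ω' _ _ μ ν _ _ T
  intro n f
  set Sf : (Fin n → Bool) → Lp ℝ (ENNReal.ofReal r₁) μ :=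
    fun s => ∑ i, sg (s i) • f i with hSf
  set X : ℝ≥0∞ := eLpNorm (fun ω => (∑ i, |f i ω| ^ q) ^ (1 / q)) (ENNReal.ofReal r₁) μ
    with hX
  set I : ℝ≥0∞ :=
    ∫⁻ ω', ENNReal.ofReal ((∑ i, (T (f i)) ω' ^ 2) ^ (r₂ / 2)) ∂ν with hI
  set J : ℝ≥0∞ :=
    ∫⁻ ω, ENNReal.ofReal ((∑ i, (f i) ω ^ 2) ^ (r₁ / 2)) ∂μ with hJ
  -- measurability facts
  have hGm : ∀ s : Fin n → Bool, AEMeasurable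
      (fun ω' => ENNReal.ofReal (|∑ i, sg (s i) * (T (f i)) ω'| ^ r₂)) ν := by
    intro s
    have h1 : AEMeasurable (fun ω' => ∑ i, sg (s i) * (T (f i)) ω') ν :=
      Finset.aemeasurable_fun_sum univ fun i _ =>
        ((Lp.aestronglyMeasurable (T (f i))).aemeasurable.const_mul _)
    have h2 : Measurable fun y : ℝ => ENNReal.ofReal (|y| ^ r₂) :=
      ENNReal.measurable_ofReal.comp ((measurable_id.abs).pow measurable_const)
    exact h2.comp_aemeasurable h1
  have hFm : ∀ s : Fin n → Bool, AEMeasurable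
      (fun ω => ENNReal.ofReal (|∑ i, sg (s i) * (f i) ω| ^ r₁)) μ := by
    intro s
    have h1 : AEMeasurable (fun ω => ∑ i, sg (s i) * (f i) ω) μ :=
      Finset.aemeasurable_fun_sum univ fun i _ =>
        ((Lp.aestronglyMeasurable (f i)).aemeasurable.const_mul _)
    have h2 : Measurable fun y : ℝ => ENNReal.ofReal (|y| ^ r₁) :=
      ENNReal.measurable_ofReal.comp ((measurable_id.abs).pow measurable_const)
    exact h2.comp_aemeasurable h1
  -- the signed sums represent Lp elements
  have key3 : ∀ s : Fin n → Bool,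
      ∫⁻ ω', ENNReal.ofReal (|∑ i, sg (s i) * (T (f i)) ω'| ^ r₂) ∂ν
        = ENNReal.ofReal (‖T (Sf s)‖ ^ r₂) := by
    intro s
    have hmap : T (Sf s) = ∑ i, sg (s i) • T (f i) := by
      rw [hSf]
      simp [map_sum, _root_.map_smul]
    have hae : ⇑(T (Sf s)) =ᵐ[ν] fun ω' => ∑ i, sg (s i) * (T (f i)) ω' := by
      rw [hmap]
      exact coeFn_signed_sum n (fun i => T (f i)) s
    rw [← lintegral_rpow_Lp hr₂pos (T (Sf s))]
    refine lintegral_congr_ae ?_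
    filter_upwards [hae] with ω' h
    rw [h]
  have key6 : ∀ s : Fin n → Bool,
      ∫⁻ ω, ENNReal.ofReal (|∑ i, sg (s i) * (f i) ω| ^ r₁) ∂μ
        = ENNReal.ofReal (‖Sf s‖ ^ r₁) := by
    intro s
    have hae : ⇑(Sf s) =ᵐ[μ] fun ω => ∑ i, sg (s i) * (f i) ω := by
      rw [hSf]
      exact coeFn_signed_sum n f s
    rw [← lintegral_rpow_Lp hr₁pos (Sf s)]
    refine lintegral_congr_ae ?_
    filter_upwards [hae] with ω h
    rw [h]
  -- Step 1 : pointwise ℓ^p ≤ ℓ² and eLpNorm formula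
  have step1 : eLpNorm (fun ω' => (∑ i, |T (f i) ω'| ^ p) ^ (1/p)) (ENNReal.ofReal r₂) ν
      ≤ I ^ (1/r₂) := by
    have hWnn : ∀ ω' : Ω', 0 ≤ (∑ i, |T (f i) ω'| ^ (2:ℝ)) ^ (1/(2:ℝ)) := fun ω' =>
      Real.rpow_nonneg (Finset.sum_nonneg fun i _ => Real.rpow_nonneg (abs_nonneg _) _) _
    have hmono : eLpNorm (fun ω' => (∑ i, |T (f i) ω'| ^ p) ^ (1/p)) (ENNReal.ofReal r₂) ν
        ≤ eLpNorm (fun ω' => (∑ i, |T (f i) ω'| ^ (2:ℝ)) ^ (1/(2:ℝ))) (ENNReal.ofReal r₂) ν := by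
      refine eLpNorm_mono_real fun ω' => ?_
      rw [Real.norm_eq_abs, abs_of_nonneg (Real.rpow_nonneg
        (Finset.sum_nonneg fun i _ => Real.rpow_nonneg (abs_nonneg _) _) _)]
      exact lp_mono _ (fun i => abs_nonneg _) (by norm_num) h2p
    refine hmono.trans (le_of_eq ?_)
    rw [eLpNorm_formula ν hr₂pos _ hWnn, hI]
    congr 1
    refine lintegral_congr fun ω' => ?_
    congr 1
    have h1 : ∑ i, |T (f i) ω'| ^ (2:ℝ) = ∑ i, (T (f i)) ω' ^ 2 :=
      Finset.sum_congr rfl fun i _ => by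
        rw [show (2:ℝ) = ((2:ℕ):ℝ) by norm_num, Real.rpow_natCast, sq_abs]
    rw [h1, ← Real.rpow_mul (Finset.sum_nonneg fun i _ => sq_nonneg _),
      show (1/(2:ℝ)) * r₂ = r₂ / 2 by ring]
  -- Step 2 : Khintchine lower bound pointwise
  have step2 : I ≤ ENNReal.ofReal A⁻¹ *
      (((2:ℝ≥0∞) ^ n)⁻¹ * ∑ s : Fin n → Bool, ENNReal.ofReal (‖T (Sf s)‖ ^ r₂)) := by
    have hpt : ∀ ω', ENNReal.ofReal ((∑ i, (T (f i)) ω' ^ 2) ^ (r₂ / 2))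
        ≤ ENNReal.ofReal (A⁻¹ * Esgn n fun s => |∑ i, sg (s i) * (T (f i)) ω'| ^ r₂) := by
      intro ω'
      refine ENNReal.ofReal_le_ofReal ?_
      have h := hA n (fun i => (T (f i)) ω')
      calc (∑ i, (T (f i)) ω' ^ 2) ^ (r₂ / 2)
          = A⁻¹ * (A * (∑ i, (T (f i)) ω' ^ 2) ^ (r₂ / 2)) := by
            field_simp
        _ ≤ A⁻¹ * Esgn n (fun s => |∑ i, sg (s i) * (T (f i)) ω'| ^ r₂) :=
            mul_le_mul_of_nonneg_left h (by positivity)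
    calc I ≤ ∫⁻ ω', ENNReal.ofReal
          (A⁻¹ * Esgn n fun s => |∑ i, sg (s i) * (T (f i)) ω'| ^ r₂) ∂ν :=
          lintegral_mono hpt
      _ = ∫⁻ ω', ENNReal.ofReal A⁻¹ * (((2:ℝ≥0∞) ^ n)⁻¹ *
            ∑ s : Fin n → Bool, ENNReal.ofReal (|∑ i, sg (s i) * (T (f i)) ω'| ^ r₂)) ∂ν := by
          refine lintegral_congr fun ω' => ?_
          rw [ENNReal.ofReal_mul (by positivity),
            ofReal_Esgn n _ (fun s => Real.rpow_nonneg (abs_nonneg _) _)]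
      _ = ENNReal.ofReal A⁻¹ * (((2:ℝ≥0∞) ^ n)⁻¹ *
            ∑ s : Fin n → Bool, ∫⁻ ω', ENNReal.ofReal (|∑ i, sg (s i) * (T (f i)) ω'| ^ r₂) ∂ν) := by
          rw [lintegral_const_mul' _ _ ENNReal.ofReal_ne_top,
            lintegral_const_mul' _ _ (two_pow_inv_ne_top n),
            lintegral_finset_sum' univ (fun s _ => hGm s)]
      _ = _ := by
          rw [Finset.sum_congr rfl fun s _ => key3 s]
  -- Step 3 : operator norm
  have step3 : ∑ s : Fin n → Bool, ENNReal.ofReal (‖T (Sf s)‖ ^ r₂)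
      ≤ ENNReal.ofReal (‖T‖ ^ r₂) * ∑ s : Fin n → Bool, ENNReal.ofReal (‖Sf s‖ ^ r₂) := by
    rw [Finset.mul_sum]
    refine Finset.sum_le_sum fun s _ => ?_
    rw [← ENNReal.ofReal_mul (by positivity)]
    refine ENNReal.ofReal_le_ofReal ?_
    rw [← Real.mul_rpow (norm_nonneg _) (norm_nonneg _)]
    exact Real.rpow_le_rpow (norm_nonneg _) (T.le_opNorm _) hr₂pos.le
  -- Step 4 : Jensen between exponents r₂ ≤ r₁
  have step4 : ((2:ℝ≥0∞) ^ n)⁻¹ * ∑ s : Fin n → Bool, ENNReal.ofReal (‖Sf s‖ ^ r₂)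
      ≤ (((2:ℝ≥0∞) ^ n)⁻¹ * ∑ s : Fin n → Bool, ENNReal.ofReal (‖Sf s‖ ^ r₁)) ^ (r₂ / r₁) := by
    rw [← ofReal_Esgn n _ (fun s => Real.rpow_nonneg (norm_nonneg _) _),
      ← ofReal_Esgn n _ (fun s => Real.rpow_nonneg (norm_nonneg _) _),
      ENNReal.ofReal_rpow_of_nonneg
        (Esgn_nonneg fun s => Real.rpow_nonneg (norm_nonneg _) _) (by positivity)]
    exact ENNReal.ofReal_le_ofReal
      (Esgn_jensen n _ (fun s => norm_nonneg _) hr₂pos (by linarith))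
  -- Step 5 : Khintchine upper bound
  have step5 : ((2:ℝ≥0∞) ^ n)⁻¹ * ∑ s : Fin n → Bool, ENNReal.ofReal (‖Sf s‖ ^ r₁)
      ≤ ENNReal.ofReal B * J := by
    have h1 : ∑ s : Fin n → Bool, ENNReal.ofReal (‖Sf s‖ ^ r₁)
        = ∫⁻ ω, ∑ s : Fin n → Bool, ENNReal.ofReal (|∑ i, sg (s i) * (f i) ω| ^ r₁) ∂μ := by
      rw [lintegral_finset_sum' univ (fun s _ => hFm s)]
      exact Finset.sum_congr rfl fun s _ => (key6 s).symm
    rw [h1, ← lintegral_const_mul' _ _ (two_pow_inv_ne_top n)]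
    calc ∫⁻ ω, ((2:ℝ≥0∞) ^ n)⁻¹ *
          ∑ s : Fin n → Bool, ENNReal.ofReal (|∑ i, sg (s i) * (f i) ω| ^ r₁) ∂μ
        ≤ ∫⁻ ω, ENNReal.ofReal (B * (∑ i, (f i) ω ^ 2) ^ (r₁ / 2)) ∂μ := by
          refine lintegral_mono fun ω => ?_
          rw [← ofReal_Esgn n _ (fun s => Real.rpow_nonneg (abs_nonneg _) _)]
          exact ENNReal.ofReal_le_ofReal (hB n (fun i => (f i) ω))
      _ = ENNReal.ofReal B * J := by
          rw [hJ, ← lintegral_const_mul' _ _ ENNReal.ofReal_ne_top]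
          refine lintegral_congr fun ω => ?_
          rw [ENNReal.ofReal_mul hBpos.le]
  -- Step 6 : pointwise ℓ² ≤ ℓ^q
  have step6 : J ≤ X ^ r₁ := by
    rw [hX, eLpNorm_formula_pow μ hr₁pos _ (fun ω => Real.rpow_nonneg
      (Finset.sum_nonneg fun i _ => Real.rpow_nonneg (abs_nonneg _) _) _), hJ]
    refine lintegral_mono fun ω => ENNReal.ofReal_le_ofReal ?_
    have h1 : ∑ i, (f i) ω ^ 2 = ∑ i, |(f i) ω| ^ (2:ℝ) :=
      Finset.sum_congr rfl fun i _ => by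
        rw [show (2:ℝ) = ((2:ℕ):ℝ) by norm_num, Real.rpow_natCast, sq_abs]
    calc (∑ i, (f i) ω ^ 2) ^ (r₁ / 2)
        = ((∑ i, |(f i) ω| ^ (2:ℝ)) ^ (1/(2:ℝ))) ^ r₁ := by
          rw [h1, ← Real.rpow_mul
            (Finset.sum_nonneg fun i _ => Real.rpow_nonneg (abs_nonneg _) _),
            show (1/(2:ℝ)) * r₁ = r₁ / 2 by ring]
      _ ≤ ((∑ i, |(f i) ω| ^ q) ^ (1/q)) ^ r₁ :=
          Real.rpow_le_rpow (Real.rpow_nonneg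
            (Finset.sum_nonneg fun i _ => Real.rpow_nonneg (abs_nonneg _) _) _)
            (lp_mono _ (fun i => abs_nonneg _) hqpos hq2) hr₁pos.le
  -- final algebra
  have halg : (ENNReal.ofReal A⁻¹ *
        (ENNReal.ofReal (‖T‖ ^ r₂) * (ENNReal.ofReal B * X ^ r₁) ^ (r₂ / r₁))) ^ (1 / r₂)
      = ENNReal.ofReal (A⁻¹ ^ (1 / r₂) * B ^ (1 / r₁) * ‖T‖) * X := by
    have hr₂ne : r₂ ≠ 0 := hr₂pos.ne'
    have hr₁ne : r₁ ≠ 0 := hr₁pos.ne'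
    rw [ENNReal.mul_rpow_of_nonneg _ _ (by positivity),
      ENNReal.mul_rpow_of_nonneg _ _ (by positivity),
      ← ENNReal.rpow_mul (ENNReal.ofReal B * X ^ r₁),
      show (r₂ / r₁) * (1 / r₂) = 1 / r₁ by field_simp,
      ENNReal.mul_rpow_of_nonneg _ _ (by positivity : (0:ℝ) ≤ 1 / r₁),
      ← ENNReal.rpow_mul X, show r₁ * (1 / r₁) = 1 by field_simp,
      ENNReal.rpow_one,
      ENNReal.ofReal_rpow_of_nonneg (by positivity) (by positivity : (0:ℝ) ≤ 1 / r₂),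
      ENNReal.ofReal_rpow_of_nonneg (by positivity) (by positivity : (0:ℝ) ≤ 1 / r₂),
      ENNReal.ofReal_rpow_of_nonneg (by positivity) (by positivity : (0:ℝ) ≤ 1 / r₁),
      show (‖T‖ ^ r₂) ^ (1 / r₂) = ‖T‖ by
        rw [← Real.rpow_mul (norm_nonneg _), show r₂ * (1 / r₂) = 1 by field_simp,
          Real.rpow_one],
      ENNReal.ofReal_mul (by positivity), ENNReal.ofReal_mul (by positivity)]
    ring
  -- assemble
  calc eLpNorm (fun ω' => (∑ i, |T (f i) ω'| ^ p) ^ (1/p)) (ENNReal.ofReal r₂) ν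
      ≤ I ^ (1/r₂) := step1
    _ ≤ (ENNReal.ofReal A⁻¹ *
          (ENNReal.ofReal (‖T‖ ^ r₂) * (ENNReal.ofReal B * X ^ r₁) ^ (r₂ / r₁))) ^ (1 / r₂) := by
        refine ENNReal.rpow_le_rpow ?_ (by positivity)
        refine step2.trans (mul_le_mul_right ?_ _)
        calc ((2:ℝ≥0∞) ^ n)⁻¹ * ∑ s : Fin n → Bool, ENNReal.ofReal (‖T (Sf s)‖ ^ r₂)
            ≤ ((2:ℝ≥0∞) ^ n)⁻¹ * (ENNReal.ofReal (‖T‖ ^ r₂) *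
                ∑ s : Fin n → Bool, ENNReal.ofReal (‖Sf s‖ ^ r₂)) := mul_le_mul_right step3 _
          _ = ENNReal.ofReal (‖T‖ ^ r₂) * (((2:ℝ≥0∞) ^ n)⁻¹ *
                ∑ s : Fin n → Bool, ENNReal.ofReal (‖Sf s‖ ^ r₂)) := by ring
          _ ≤ ENNReal.ofReal (‖T‖ ^ r₂) * ((((2:ℝ≥0∞) ^ n)⁻¹ *
                ∑ s : Fin n → Bool, ENNReal.ofReal (‖Sf s‖ ^ r₁)) ^ (r₂ / r₁)) :=
              mul_le_mul_right step4 _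
          _ ≤ ENNReal.ofReal (‖T‖ ^ r₂) * ((ENNReal.ofReal B * J) ^ (r₂ / r₁)) :=
              mul_le_mul_right (ENNReal.rpow_le_rpow step5 (by positivity)) _
          _ ≤ ENNReal.ofReal (‖T‖ ^ r₂) * ((ENNReal.ofReal B * X ^ r₁) ^ (r₂ / r₁)) :=
              mul_le_mul_right (ENNReal.rpow_le_rpow (mul_le_mul_right step6 _)
                (by positivity)) _
    _ = ENNReal.ofReal (A⁻¹ ^ (1 / r₂) * B ^ (1 / r₁) * ‖T‖) * X := halg
end
end
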